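/- arXiv:2202.07165 — 3 statements merged into one kernel-verified Lean document; each statement's English description precedes it below -/
import Mathlib

section
/- Let d ≥ 1, let M₀ ≥ d, and let g be a finite list of pairs (index, value) ∈ ℕ × ℝ with every index < d. Let g₁ = g ++ [(0,0), (1,0), …, (d−1,0)], let l₁ be any permutation of g₁ that is non-decreasing in the first component, let l₂ = F(l₁) be the result of oblivious folding with dummy index M₀, and let l₃ be any permutation of l₂ that is non-decreasing in the first component. Then for every j < d the j-th entry of l₃ equals (j, ∑_{(i,v) ∈ g, i = j} v); in particular, the Advanced algorithm outputs exactly the per-index aggregate of the input gradients g. -/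
/-- The scan underlying oblivious folding with dummy index `M0`: `acc` is the
current accumulator and the list argument is the part of the input not yet
processed.  If the next entry has the same index as the accumulator, output a
dummy `(M0, 0)` and fold the value into the accumulator; otherwise output the
accumulator and restart from the next entry.  The accumulator is emitted at
the very end. -/
def obliviousFoldAux (M0 : ℕ) : List (ℕ × ℝ) → (ℕ × ℝ) → List (ℕ × ℝ)
  | [], acc => [acc]
  | x :: xs, acc =>
      if x.1 = acc.1 then (M0, 0) :: obliviousFoldAux M0 xs (acc.1, acc.2 + x.2)
      else acc :: obliviousFoldAux M0 xs x

/-- Oblivious folding `F` with dummy index `M0`. -/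
def F (M0 : ℕ) : List (ℕ × ℝ) → List (ℕ × ℝ)
  | [] => []
  | x :: xs => obliviousFoldAux M0 xs x

lemma ofa_filter (M0 j : ℕ) (hj : j ≠ M0) :
    ∀ (xs : List (ℕ × ℝ)) (acc : ℕ × ℝ),
    (∀ x ∈ xs, acc.1 ≤ x.1) → xs.Pairwise (fun a b => a.1 ≤ b.1) →
    (obliviousFoldAux M0 xs acc).filter (fun p => p.1 = j) =
      if j ∈ (acc :: xs).map Prod.fst then
        [(j, (((acc :: xs).filter (fun p => p.1 = j)).map Prod.snd).sum)]
      else []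
  | [], acc, _, _ => by
    by_cases h : acc.1 = j
    · have hacc : acc = (j, acc.2) := by rw [Prod.ext_iff]; exact ⟨h, rfl⟩
      rw [hacc]
      simp [obliviousFoldAux, List.filter_cons]
    · simp only [obliviousFoldAux, List.filter_cons, decide_eq_true_eq, h, if_false,
        List.map_cons, List.map_nil, List.filter_nil]
      rw [if_neg (by simp; exact fun h' => h h'.symm)]
  | x :: t, acc, hle, hs => by
    obtain ⟨hxt, hts⟩ := List.pairwise_cons.1 hs
    rw [obliviousFoldAux]
    by_cases hx : x.1 = acc.1
    · rw [if_pos hx]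
      have hle' : ∀ y ∈ t, ((acc.1, acc.2 + x.2) : ℕ × ℝ).1 ≤ y.1 := by
        intro y hy; simpa [← hx] using hxt y hy
      have ih := ofa_filter M0 j hj t (acc.1, acc.2 + x.2) hle' hts
      rw [List.filter_cons_of_neg (by simpa using hj.symm), ih]
      by_cases hja : j = acc.1
      · rw [if_pos (by simp [hja]), if_pos (by simp [hja])]
        simp [List.filter_cons, hja, hx, add_assoc]
      · have e1 : (j ∈ ((acc.1, acc.2 + x.2) :: t).map Prod.fst) ↔ j ∈ t.map Prod.fst := by
          simp [hja]
        have e2 : (j ∈ (acc :: x :: t).map Prod.fst) ↔ j ∈ t.map Prod.fst := by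
          simp [hja, hx]
        have f1 : ((acc.1, acc.2 + x.2) :: t).filter (fun p => p.1 = j) =
            t.filter (fun p => p.1 = j) := by
          rw [List.filter_cons_of_neg]; simpa using Ne.symm hja
        have f2 : ((acc :: x :: t).filter (fun p => p.1 = j)) =
            t.filter (fun p => p.1 = j) := by
          rw [List.filter_cons_of_neg (by simpa using Ne.symm hja),
            List.filter_cons_of_neg (by simp [hx]; exact fun h => hja h.symm)]
        rw [f1, f2]
        by_cases hm : j ∈ t.map Prod.fst
        · rw [if_pos (e1.2 hm), if_pos (e2.2 hm)]
        · rw [if_neg (fun h => hm (e1.1 h)), if_neg (fun h => hm (e2.1 h))]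
    · rw [if_neg hx]
      have hax : acc.1 < x.1 := lt_of_le_of_ne (hle x (by simp)) (Ne.symm hx)
      have ih := ofa_filter M0 j hj t x hxt hts
      rw [List.filter_cons, ih]
      by_cases hja : j = acc.1
      · have hgt : ∀ p ∈ x :: t, j < p.1 := by
          intro p hp
          rcases List.mem_cons.1 hp with rfl | hp
          · omega
          · have := hxt p hp; omega
        have hnot : j ∉ (x :: t).map Prod.fst := by
          intro hmem
          obtain ⟨p, hp, hpe⟩ := List.mem_map.1 hmem
          have := hgt p hp; omega
        rw [if_neg hnot, if_pos (by simp [hja])]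
        have hfilt : (x :: t).filter (fun p => p.1 = j) = [] := by
          rw [List.filter_eq_nil_iff]
          intro p hp
          simp only [decide_eq_true_eq]
          have := hgt p hp; omega
        have f2 : ((acc :: x :: t).filter (fun p => p.1 = j)) = [acc] := by
          rw [List.filter_cons_of_pos (by simp [hja]), hfilt]
        rw [f2]
        simp [hja, Prod.ext_iff]
      · rw [if_neg (by simpa using Ne.symm hja)]
        have f2 : ((acc :: x :: t).filter (fun p => p.1 = j)) =
            (x :: t).filter (fun p => p.1 = j) := by
          rw [List.filter_cons_of_neg]; simpa using Ne.symm hja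
        have e2 : (j ∈ (acc :: x :: t).map Prod.fst) ↔ j ∈ (x :: t).map Prod.fst := by
          simp [hja]
        rw [f2]
        by_cases hm : j ∈ (x :: t).map Prod.fst
        · rw [if_pos hm, if_pos (e2.2 hm)]
        · rw [if_neg hm, if_neg (fun h => hm (e2.1 h))]
lemma ofa_length (M0 : ℕ) : ∀ (xs : List (ℕ × ℝ)) (acc : ℕ × ℝ),
    (obliviousFoldAux M0 xs acc).length = xs.length + 1
  | [], acc => rfl
  | x :: xs, acc => by
    rw [obliviousFoldAux]
    split <;> simp [ofa_length M0 xs]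

lemma ofa_dummy (M0 : ℕ) : ∀ (xs : List (ℕ × ℝ)) (acc : ℕ × ℝ),
    (∀ x ∈ xs, acc.1 ≤ x.1) → xs.Pairwise (fun a b => a.1 ≤ b.1) →
    acc.1 ≠ M0 → (∀ x ∈ xs, x.1 ≠ M0) →
    (obliviousFoldAux M0 xs acc).countP (fun p => p.1 = M0)
      + ((acc.1 :: xs.map Prod.fst).dedup).length = xs.length + 1
  | [], acc, _, _, ha, _ => by
    simp [obliviousFoldAux, List.countP_cons, ha]
  | x :: t, acc, hle, hs, ha, hd => by
    obtain ⟨hxt, hts⟩ := List.pairwise_cons.1 hs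
    rw [obliviousFoldAux]
    by_cases hx : x.1 = acc.1
    · rw [if_pos hx]
      have ih := ofa_dummy M0 t (acc.1, acc.2 + x.2)
        (fun y hy => by simpa [← hx] using hxt y hy) hts ha
        (fun y hy => hd y (List.mem_cons_of_mem _ hy))
      have hded : ((acc.1 :: (x :: t).map Prod.fst).dedup)
          = ((acc.1 :: t.map Prod.fst).dedup) := by
        rw [List.map_cons, hx, List.dedup_cons_of_mem List.mem_cons_self]
      rw [hded]
      simp only [List.countP_cons, List.length_cons, decide_eq_true_eq, if_pos rfl]
      rw [show ((acc.1, acc.2 + x.2) : ℕ × ℝ).1 = acc.1 from rfl] at ih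
      rw [if_pos trivial]
      omega
    · rw [if_neg hx]
      have hax : acc.1 < x.1 := lt_of_le_of_ne (hle x (by simp)) (Ne.symm hx)
      have ih := ofa_dummy M0 t x hxt hts (hd x (by simp))
        (fun y hy => hd y (List.mem_cons_of_mem _ hy))
      have hded : ((acc.1 :: (x :: t).map Prod.fst).dedup)
          = acc.1 :: ((x.1 :: t.map Prod.fst).dedup) := by
        rw [List.map_cons, List.dedup_cons_of_notMem]
        intro hmem
        rcases List.mem_cons.1 hmem with h | h
        · omega
        · obtain ⟨p, hp, hpe⟩ := List.mem_map.1 h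
          have := hxt p hp; omega
      rw [hded]
      simp only [List.countP_cons, List.length_cons, decide_eq_true_eq, if_neg ha]
      omega

lemma count_map_fst (l : List (ℕ × ℝ)) (n : ℕ) :
    (l.map Prod.fst).count n = l.countP (fun p => p.1 = n) := by
  rw [List.count, List.countP_map]
  apply List.countP_congr; intro p _
  simp only [Function.comp, beq_iff_eq, decide_eq_true_eq]

lemma count_range' (a n : ℕ) : (List.range n).count a = if a < n then 1 else 0 := by
  rcases lt_or_ge a n with h | h
  · rw [List.count_eq_one_of_mem List.nodup_range (List.mem_range.2 h), if_pos h]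
  · rw [List.count_eq_zero_of_not_mem (by simp [not_lt.2 h]), if_neg (not_lt.2 h)]


/-- Correctness of the Advanced aggregation algorithm: starting from input
gradients `g` whose indices are all `< d`, after initialization
(`g₁ = g ++ [(0,0), …, (d−1,0)]`), a sort by index, oblivious folding, and a
second sort by index, the `j`-th entry of the result is
`(j, ∑_{(i,v) ∈ g, i = j} v)` for every `j < d`. -/
theorem advanced_correct (d M0 : ℕ) (hd : 1 ≤ d) (hM0 : d ≤ M0)
    (g : List (ℕ × ℝ)) (hg : ∀ p ∈ g, p.1 < d)
    (g1 : List (ℕ × ℝ)) (hg1 : g1 = g ++ (List.range d).map fun j => ((j : ℕ), (0 : ℝ)))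
    (l1 : List (ℕ × ℝ)) (hl1p : l1.Perm g1)
    (hl1s : l1.Pairwise fun a b => a.1 ≤ b.1)
    (l2 : List (ℕ × ℝ)) (hl2 : l2 = F M0 l1)
    (l3 : List (ℕ × ℝ)) (hl3p : l3.Perm l2)
    (hl3s : l3.Pairwise fun a b => a.1 ≤ b.1) :
    ∀ j < d,
      l3.getD j ((0 : ℕ), (0 : ℝ)) =
        ((j : ℕ), ((g.filter fun p => p.1 = j).map Prod.snd).sum) := by
  subst hg1 hl2
  intro j hj
  have hl1lt : ∀ p ∈ l1, p.1 < d := by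
    intro p hp
    rcases List.mem_append.1 (hl1p.subset hp) with h | h
    · exact hg p h
    · obtain ⟨i, hi, rfl⟩ := List.mem_map.1 h; exact List.mem_range.1 hi
  have hl1len : l1.length = g.length + d := by simpa using hl1p.length_eq
  have hmemfst : ∀ n, n ∈ l1.map Prod.fst ↔ n < d := by
    intro n; constructor
    · intro h; obtain ⟨p, hp, rfl⟩ := List.mem_map.1 h; exact hl1lt p hp
    · intro h
      have : ((n, (0:ℝ))) ∈ l1 := (hl1p.mem_iff).2
        (List.mem_append.2 (Or.inr (List.mem_map.2 ⟨n, List.mem_range.2 h, rfl⟩)))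
      exact List.mem_map.2 ⟨_, this, rfl⟩
  obtain ⟨h0, t, rfl⟩ : ∃ h0 t, l1 = h0 :: t := by
    cases l1 with
    | nil => simp at hl1len; omega
    | cons a b => exact ⟨a, b, rfl⟩
  obtain ⟨hh0t, hts⟩ := List.pairwise_cons.1 hl1s
  have hF : F M0 (h0 :: t) = obliviousFoldAux M0 t h0 := rfl
  rw [hF] at hl3p
  -- filter characterization
  have hfilt : ∀ n, n ≠ M0 → (obliviousFoldAux M0 t h0).filter (fun p => p.1 = n) =
      if n < d then [(n, (((h0 :: t).filter (fun p => p.1 = n)).map Prod.snd).sum)]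
      else [] := by
    intro n hn
    rw [ofa_filter M0 n hn t h0 hh0t hts]
    by_cases hnd : n < d
    · rw [if_pos ((hmemfst n).2 hnd), if_pos hnd]
    · rw [if_neg (fun h => hnd ((hmemfst n).1 h)), if_neg hnd]
  -- dedup length
  have hdedup : ((h0.1 :: t.map Prod.fst).dedup).length = d := by
    rw [show (h0.1 :: t.map Prod.fst) = (h0 :: t).map Prod.fst from rfl, ← List.card_toFinset]
    have : ((h0 :: t).map Prod.fst).toFinset = Finset.range d := by
      ext n
      simp only [List.mem_toFinset, Finset.mem_range]
      exact hmemfst n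
    rw [this, Finset.card_range]
  -- dummy count
  have hdum : (obliviousFoldAux M0 t h0).countP (fun p => p.1 = M0) = g.length := by
    have hne : ∀ x ∈ h0 :: t, x.1 ≠ M0 := fun x hx => by
      have := hl1lt x hx; omega
    have := ofa_dummy M0 t h0 hh0t hts (hne h0 (by simp))
      (fun y hy => hne y (List.mem_cons_of_mem _ hy))
    rw [hdedup] at this
    have hlt : (h0 :: t).length = g.length + d := hl1len
    simp only [List.length_cons] at hlt
    omega
  -- permutation of the fst lists
  have hpermf : (l3.map Prod.fst).Perm (List.range d ++ List.replicate g.length M0) := by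
    refine (hl3p.map Prod.fst).trans ?_
    rw [List.perm_iff_count]
    intro n
    rw [count_map_fst, List.count_append, List.count_replicate, count_range']
    by_cases hn : n = M0
    · subst hn
      rw [hdum, if_neg (by omega), if_pos (by simp)]
      omega
    · rw [List.countP_eq_length_filter, hfilt n hn]
      by_cases hnd : n < d
      · rw [if_pos hnd, if_pos hnd, if_neg (by simpa using Ne.symm hn)]
        simp
      · rw [if_neg hnd, if_neg hnd, if_neg (by simpa using Ne.symm hn)]
        simp
  have hs1 : (l3.map Prod.fst).Pairwise (· ≤ ·) :=
    List.Pairwise.map Prod.fst (fun a b h => h) hl3s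
  have hs2 : (List.range d ++ List.replicate g.length M0).Pairwise (· ≤ ·) := by
    rw [List.pairwise_append]
    refine ⟨List.pairwise_le_range, ?_, ?_⟩
    · exact List.pairwise_replicate.2 (Or.inr le_rfl)
    · intro a ha b hb
      rw [List.mem_range] at ha
      rw [List.eq_of_mem_replicate hb]
      omega
  have heq : l3.map Prod.fst = List.range d ++ List.replicate g.length M0 :=
    List.Perm.eq_of_pairwise (fun a b _ _ h1 h2 => le_antisymm h1 h2) hs1 hs2 hpermf
  -- lengths
  have hlen3 : l3.length = g.length + d := by
    rw [hl3p.length_eq, ofa_length]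
    simp only [List.length_cons] at hl1len
    omega
  have hjlen : j < l3.length := by omega
  rw [List.getD_eq_getElem _ _ hjlen]
  have hfst : (l3[j]'hjlen).1 = j := by
    have h1 : (l3.map Prod.fst)[j]'(by simpa using hjlen) = (l3[j]'hjlen).1 :=
      List.getElem_map _
    have h2 : (List.range d ++ List.replicate g.length M0)[j]'(by
        simp; omega) = j := by
      rw [List.getElem_append_left (by simpa using hj), List.getElem_range]
    rw [← h1, List.getElem_of_eq heq]
    exact h2
  have hmem2 : l3[j]'hjlen ∈ (obliviousFoldAux M0 t h0).filter (fun p => p.1 = j) :=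
    List.mem_filter.2 ⟨hl3p.subset (l3.getElem_mem hjlen), by simp [hfst]⟩
  rw [hfilt j (by omega), if_pos hj] at hmem2
  have he := List.mem_singleton.1 hmem2
  rw [he]
  -- compute the sum
  have hp2 : (((h0 :: t).filter (fun p => p.1 = j)).map Prod.snd).Perm
      (((g ++ (List.range d).map fun i => ((i:ℕ),(0:ℝ))).filter (fun p => p.1 = j)).map Prod.snd) :=
    (hl1p.filter _).map _
  rw [hp2.sum_eq]
  rw [List.filter_append, List.map_append, List.sum_append]
  have hz : ((((List.range d).map fun i => ((i:ℕ),(0:ℝ))).filter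
      (fun p => p.1 = j)).map Prod.snd).sum = 0 := by
    apply List.sum_eq_zero
    intro x hx
    obtain ⟨p, hp, rfl⟩ := List.mem_map.1 hx
    obtain ⟨i, _, rfl⟩ := List.mem_map.1 (List.mem_of_mem_filter hp)
    rfl
  rw [hz, add_zero]
end

section
/- Let M₀ ∈ ℕ and let l be a nonempty list of pairs in ℕ × ℝ that is non-decreasing in the first component and whose first components are all strictly less than M₀. Then F(l) has the same length as l and satisfies: for every index i occurring as a first component of an entry of l, the entry of F(l) at the position of the last occurrence of i in l equals (i, ∑_{(i',v) ∈ l, i' = i} v), and every other entry of F(l) equals (M₀, 0). -/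
lemma aux_correct (M0 : ℕ) (xs : List (ℕ × ℝ)) : ∀ acc : ℕ × ℝ,
    ((acc :: xs).Pairwise fun a b => a.1 ≤ b.1) →
    (obliviousFoldAux M0 xs acc).length = (acc :: xs).length ∧
      (∀ (i : ℕ) (p : ℕ), p < (acc :: xs).length →
        ((acc :: xs).getD p ((0:ℕ),(0:ℝ))).1 = i →
        (∀ q, p < q → q < (acc :: xs).length →
          ((acc :: xs).getD q ((0:ℕ),(0:ℝ))).1 ≠ i) →
        (obliviousFoldAux M0 xs acc).getD p ((0:ℕ),(0:ℝ)) =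
          (i, (((acc :: xs).filter fun e => e.1 = i).map Prod.snd).sum)) ∧
      (∀ p : ℕ, p < (acc :: xs).length →
        (∃ q, p < q ∧ q < (acc :: xs).length ∧
          (((acc :: xs)).getD q ((0:ℕ),(0:ℝ))).1 =
            ((acc :: xs).getD p ((0:ℕ),(0:ℝ))).1) →
        (obliviousFoldAux M0 xs acc).getD p ((0:ℕ),(0:ℝ)) = ((M0:ℕ), (0:ℝ))) := by
  induction xs with
  | nil =>
    intro acc _
    refine ⟨rfl, ?_, ?_⟩
    · intro i p hp hpi _
      have hp0 : p = 0 := by simpa using hp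
      subst hp0
      simp only [List.getD_cons_zero] at hpi
      simp [obliviousFoldAux, List.filter_cons, hpi, Prod.ext_iff]
    · intro p hp ⟨q, hpq, hq, _⟩
      simp at hp hq; omega
  | cons b t ih =>
    intro acc hs
    have hsbt : ((b :: t).Pairwise fun a b => a.1 ≤ b.1) := hs.tail
    have hab : acc.1 ≤ b.1 := (List.pairwise_cons.mp hs).1 b (by simp)
    by_cases hb : b.1 = acc.1
    · -- merge case
      set acc' : ℕ × ℝ := (acc.1, acc.2 + b.2) with hacc'
      have hs' : ((acc' :: t).Pairwise fun a b => a.1 ≤ b.1) := by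
        rw [List.pairwise_cons]
        refine ⟨?_, hsbt.tail⟩
        intro m hm
        have := (List.pairwise_cons.mp hsbt).1 m hm
        simp only [hacc']; omega
      obtain ⟨ihlen, ihlast, ihdum⟩ := ih acc' hs'
      have hunf : obliviousFoldAux M0 (b :: t) acc =
          (M0, 0) :: obliviousFoldAux M0 t acc' := by
        simp [obliviousFoldAux, hb, hacc']
      have hfst : ∀ p, ((acc' :: t).getD p ((0:ℕ),(0:ℝ))).1 =
          ((b :: t).getD p ((0:ℕ),(0:ℝ))).1 := by
        intro p; cases p with
        | zero => simp [hacc', hb]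
        | succ n => simp
      refine ⟨?_, ?_, ?_⟩
      · rw [hunf]; simp at ihlen ⊢; omega
      · intro i p hp hpi hq
        cases p with
        | zero =>
          exfalso
          simp only [List.getD_cons_zero] at hpi
          have := hq 1 (by omega) (by simp)
          simp only [List.getD_cons_succ, List.getD_cons_zero] at this
          exact this (by rw [hb, hpi])
        | succ p' =>
          rw [hunf, List.getD_cons_succ]
          have h1 : p' < (acc' :: t).length := by simp at hp ⊢; omega
          have h2 : ((acc' :: t).getD p' ((0:ℕ),(0:ℝ))).1 = i := by
            rw [hfst]; simpa using hpi
          have h3 : ∀ q, p' < q → q < (acc' :: t).length →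
              ((acc' :: t).getD q ((0:ℕ),(0:ℝ))).1 ≠ i := by
            intro q hq1 hq2
            rw [hfst]
            have := hq (q+1) (by omega) (by simp at hq2 ⊢; omega)
            simpa using this
          rw [ihlast i p' h1 h2 h3]
          have hfil : (((acc' :: t).filter fun e => e.1 = i).map Prod.snd).sum =
              (((acc :: b :: t).filter fun e => e.1 = i).map Prod.snd).sum := by
            by_cases hi : acc.1 = i
            · simp [List.filter_cons, hacc', hb, hi]; ring
            · simp [List.filter_cons, hacc', hb, hi]
          rw [hfil]
      · intro p hp ⟨q, hpq, hq, hqe⟩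
        cases p with
        | zero => rw [hunf]; simp
        | succ p' =>
          rw [hunf, List.getD_cons_succ]
          refine ihdum p' (by simp at hp ⊢; omega) ?_
          obtain ⟨q', rfl⟩ : ∃ q', q = q' + 1 := ⟨q - 1, by omega⟩
          refine ⟨q', by omega, by simp at hq ⊢; omega, ?_⟩
          rw [hfst, hfst]
          simpa using hqe
    · -- new index case
      obtain ⟨ihlen, ihlast, ihdum⟩ := ih b hsbt
      have hunf : obliviousFoldAux M0 (b :: t) acc =
          acc :: obliviousFoldAux M0 t b := by
        simp [obliviousFoldAux, hb]
      have hlt' : ∀ m ∈ b :: t, acc.1 < m.1 := by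
        intro m hm
        rcases List.mem_cons.mp hm with rfl | hm
        · omega
        · have := (List.pairwise_cons.mp hsbt).1 m hm; omega
      have hltD : ∀ q, q < (b :: t).length →
          acc.1 < (((b :: t)).getD q ((0:ℕ),(0:ℝ))).1 := by
        intro q hqlen
        refine hlt' _ ?_
        rw [List.getD_eq_getElem _ _ hqlen]
        exact List.getElem_mem hqlen
      refine ⟨?_, ?_, ?_⟩
      · rw [hunf]; simp at ihlen ⊢; omega
      · intro i p hp hpi hq
        cases p with
        | zero =>
          simp only [List.getD_cons_zero] at hpi
          rw [hunf, List.getD_cons_zero]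
          have hnil : (b :: t).filter (fun e => e.1 = i) = [] := by
            rw [List.filter_eq_nil_iff]
            intro m hm
            have := hlt' m hm
            simp; omega
          rw [show ((acc :: b :: t).filter fun e => e.1 = i) =
              acc :: ((b :: t).filter fun e => e.1 = i) by
            simp [List.filter_cons, hpi]]
          rw [hnil]
          simp [Prod.ext_iff, hpi]
        | succ p' =>
          rw [hunf, List.getD_cons_succ]
          have h1 : p' < (b :: t).length := by simp at hp ⊢; omega
          have h2 : ((b :: t).getD p' ((0:ℕ),(0:ℝ))).1 = i := by simpa using hpi
          have h3 : ∀ q, p' < q → q < (b :: t).length →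
              ((b :: t).getD q ((0:ℕ),(0:ℝ))).1 ≠ i := by
            intro q hq1 hq2
            have := hq (q+1) (by omega) (by simp at hq2 ⊢; omega)
            simpa using this
          rw [ihlast i p' h1 h2 h3]
          have hai : ¬ (acc.1 = i) := by
            have := hltD p' h1; omega
          rw [show ((acc :: b :: t).filter fun e => e.1 = i) =
              ((b :: t).filter fun e => e.1 = i) by
            simp [List.filter_cons, hai]]
      · intro p hp ⟨q, hpq, hq, hqe⟩
        cases p with
        | zero =>
          exfalso
          obtain ⟨q', rfl⟩ : ∃ q', q = q' + 1 := ⟨q - 1, by omega⟩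
          simp only [List.getD_cons_succ, List.getD_cons_zero] at hqe
          have := hltD q' (by simp at hq ⊢; omega)
          omega
        | succ p' =>
          rw [hunf, List.getD_cons_succ]
          refine ihdum p' (by simp at hp ⊢; omega) ?_
          obtain ⟨q', rfl⟩ : ∃ q', q = q' + 1 := ⟨q - 1, by omega⟩
          exact ⟨q', by omega, by simp at hq ⊢; omega, by simpa using hqe⟩

/-- For a nonempty list `l` of pairs in `ℕ × ℝ`, non-decreasing in the first
component and with all first components `< M0`: `F(l)` has the same length as
`l`; at the position of the last occurrence of each index `i` occurring in
`l`, `F(l)` carries `(i, ∑_{(i',v) ∈ l, i' = i} v)`; and every other entry of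
`F(l)` equals `(M0, 0)`. -/
theorem oblivious_folding_correct (M0 : ℕ) (l : List (ℕ × ℝ))
    (hne : l ≠ [])
    (hsorted : l.Pairwise fun a b => a.1 ≤ b.1)
    (hlt : ∀ p ∈ l, p.1 < M0) :
    (F M0 l).length = l.length ∧
      (∀ (i : ℕ) (p : ℕ), p < l.length →
        (l.getD p ((0 : ℕ), (0 : ℝ))).1 = i →
        (∀ q, p < q → q < l.length → (l.getD q ((0 : ℕ), (0 : ℝ))).1 ≠ i) →
        (F M0 l).getD p ((0 : ℕ), (0 : ℝ)) =
          (i, ((l.filter fun e => e.1 = i).map Prod.snd).sum)) ∧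
      (∀ p : ℕ, p < l.length →
        (∃ q, p < q ∧ q < l.length ∧
          (l.getD q ((0 : ℕ), (0 : ℝ))).1 = (l.getD p ((0 : ℕ), (0 : ℝ))).1) →
        (F M0 l).getD p ((0 : ℕ), (0 : ℝ)) = ((M0 : ℕ), (0 : ℝ))) := by
  cases l with
  | nil => exact absurd rfl hne
  | cons a xs => exact aux_correct M0 xs a hsorted
end

section
/- For every m ∈ ℕ, every linearly ordered type α, and every list l over α of length 2^m, applying the compare-exchange operations of Batcher's bitonic sorting network on 2^m positions to l yields a list that is a permutation of l and is sorted in non-decreasing order; moreover, the sequence of position pairs at which compare-exchanges are performed depends only on m and not on the contents of l. -/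
/-- The compare-exchange operations of Batcher's bitonic sorting network on
`2^m` positions: for stage `k = 1, …, m` and `j = k−1` down to `0`, for every
`i ∈ {0, …, 2^m − 1}` whose `j`-th binary bit is `0`, compare-exchange
positions `i` and `i + 2^j`, ascending iff the `k`-th binary bit of `i` is
`0`.  Each element is `(i, i + 2^j, ascending?)`. -/
def bitonicPairs (m : ℕ) : List (ℕ × ℕ × Bool) :=
  (List.range m).flatMap fun k' =>
    let k := k' + 1
    ((List.range k).reverse).flatMap fun j =>
      ((List.range (2 ^ m)).filter fun i => !i.testBit j).map fun i =>
        (i, i + 2 ^ j, !i.testBit k)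

/-- A single compare-exchange on a list: places the entries at the two given
positions in ascending order if the flag is `true`, descending otherwise. -/
def cexList {α : Type*} [LinearOrder α] (l : List α) (op : ℕ × ℕ × Bool) : List α :=
  match l[op.1]?, l[op.2.1]? with
  | some a, some b =>
      let ok : Bool := if op.2.2 then decide (a ≤ b) else decide (b ≤ a)
      if ok then l else (l.set op.1 b).set op.2.1 a
  | _, _ => l

/-- Running Batcher's bitonic sorting network on a list, also recording the
sequence of position pairs at which compare-exchanges are performed. -/
def runNetwork {α : Type*} [LinearOrder α] (m : ℕ) (l : List α) :
    List α × List (ℕ × ℕ) :=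
  List.foldl (fun s op => (cexList s.1 op, s.2 ++ [(op.1, op.2.1)]))
    (l, ([] : List (ℕ × ℕ))) (bitonicPairs m)

namespace Bitonic


/-- function-level compare exchange on booleans -/
def cexF (v : ℕ → Bool) (op : ℕ × ℕ × Bool) : ℕ → Bool := fun x =>
  if x = op.1 then (if op.2.2 then min (v op.1) (v op.2.1) else max (v op.1) (v op.2.1))
  else if x = op.2.1 then (if op.2.2 then max (v op.1) (v op.2.1) else min (v op.1) (v op.2.1))
  else v x

def runF (v : ℕ → Bool) (ops : List (ℕ × ℕ × Bool)) : ℕ → Bool := ops.foldl cexF v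

@[simp] lemma runF_nil (v : ℕ → Bool) : runF v [] = v := rfl
@[simp] lemma runF_cons (v : ℕ → Bool) (op) (ops) :
    runF v (op :: ops) = runF (cexF v op) ops := rfl
@[simp] lemma runF_append (v : ℕ → Bool) (l₁ l₂) :
    runF v (l₁ ++ l₂) = runF (runF v l₁) l₂ := List.foldl_append ..

lemma cexF_of_ne (v : ℕ → Bool) (op) {x : ℕ} (h1 : x ≠ op.1) (h2 : x ≠ op.2.1) :
    cexF v op x = v x := by simp [cexF, h1, h2]

lemma runF_untouched (ops : List (ℕ × ℕ × Bool)) (v : ℕ → Bool) {x : ℕ}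
    (h : ∀ op ∈ ops, x ≠ op.1 ∧ x ≠ op.2.1) : runF v ops x = v x := by
  induction ops generalizing v with
  | nil => rfl
  | cons op ops ih =>
      rw [runF_cons, ih _ (fun o ho => h o (List.mem_cons_of_mem _ ho)),
        cexF_of_ne v op (h op (List.mem_cons_self ..)).1 (h op (List.mem_cons_self ..)).2]

lemma runF_congr {S : ℕ → Prop} (ops : List (ℕ × ℕ × Bool))
    (hops : ∀ op ∈ ops, S op.1 ∧ S op.2.1) {v w : ℕ → Bool}
    (hvw : ∀ x, S x → v x = w x) : ∀ x, S x → runF v ops x = runF w ops x := by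
  induction ops generalizing v w with
  | nil => exact hvw
  | cons op ops ih =>
      intro x hx
      rw [runF_cons, runF_cons]
      refine ih (fun o ho => hops o (List.mem_cons_of_mem _ ho)) (fun y hy => ?_) x hx
      have h1 := (hops op (List.mem_cons_self ..)).1
      have h2 := (hops op (List.mem_cons_self ..)).2
      simp only [cexF, hvw _ h1, hvw _ h2, hvw _ hy]



lemma testBit_iff_mod (i j : ℕ) : i.testBit j = true ↔ 2 ^ j ≤ i % 2 ^ (j + 1) := by
  have h1 : i / 2 ^ j % 2 = i % (2 ^ j * 2) / 2 ^ j := (Nat.mod_mul_right_div_self ..).symm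
  have h2 : (2 : ℕ) ^ (j + 1) = 2 ^ j * 2 := by ring
  have hp : 0 < (2 : ℕ) ^ j := Nat.pow_pos (by norm_num)
  have h3 : i % (2 ^ j * 2) < 2 ^ j * 2 := Nat.mod_lt _ (by positivity)
  rw [Nat.testBit_eq_decide_div_mod_eq, decide_eq_true_iff, h1, h2]
  constructor
  · intro h; by_contra hc; push_neg at hc
    rw [Nat.div_eq_of_lt hc] at h; omega
  · intro h
    have := Nat.div_le_div_right (c := 2 ^ j) h
    rw [Nat.div_self hp] at this
    have : i % (2 ^ j * 2) / 2 ^ j < 2 := Nat.div_lt_of_lt_mul (by omega)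
    omega

lemma testBit_false_iff_mod (i j : ℕ) : i.testBit j = false ↔ i % 2 ^ (j + 1) < 2 ^ j := by
  rw [← Bool.not_eq_true, testBit_iff_mod]; omega

lemma testBit_add_pow (i j : ℕ) (h : i.testBit j = false) :
    (i + 2 ^ j).testBit j = true := by
  rw [testBit_false_iff_mod] at h
  rw [testBit_iff_mod]
  have h2 : (2:ℕ) ^ (j+1) = 2 ^ j + 2 ^ j := by ring
  have e1 : (i + 2 ^ j) % 2 ^ (j + 1) = i % 2 ^ (j + 1) + 2 ^ j := by
    rw [Nat.add_mod, Nat.mod_eq_of_lt (show (2:ℕ)^j < 2^(j+1) by omega),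
      Nat.mod_eq_of_lt (by omega)]
  omega

lemma rowRun (j : ℕ) (d : ℕ → Bool) (v : ℕ → Bool) (is : List ℕ) (hnd : is.Nodup)
    (hbit : ∀ i ∈ is, i.testBit j = false) (p : ℕ) :
    runF v (is.map fun i => (i, i + 2 ^ j, d i)) p =
      if p ∈ is then (if d p then min (v p) (v (p + 2 ^ j)) else max (v p) (v (p + 2 ^ j)))
      else if p - 2 ^ j ∈ is ∧ 2 ^ j ≤ p then
        (if d (p - 2 ^ j) then max (v (p - 2 ^ j)) (v p) else min (v (p - 2 ^ j)) (v p))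
      else v p := by
  induction is generalizing v with
  | nil => simp [runF]
  | cons i is ih =>
    have hpow : 0 < 2 ^ j := Nat.pow_pos (by norm_num)
    have hi : i.testBit j = false := hbit i (List.mem_cons_self ..)
    have hibit : (i + 2 ^ j).testBit j = true := testBit_add_pow _ _ hi
    have hinotmem : i + 2 ^ j ∉ is := fun h => by
      have := hbit _ (List.mem_cons_of_mem _ h); rw [hibit] at this; exact absurd this (by simp)
    have hnd' : is.Nodup := hnd.of_cons
    have hineq : i ∉ is := (List.nodup_cons.mp hnd).1
    rw [List.map_cons, runF_cons]
    rcases eq_or_ne p i with rfl | hpi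
    · rw [runF_untouched]
      · simp only [cexF, if_pos rfl, List.mem_cons_self, if_pos]
      · intro op hop
        simp only [List.mem_map] at hop
        obtain ⟨i', hi', rfl⟩ := hop
        dsimp only
        refine ⟨fun h => hineq (h ▸ hi'), fun h => ?_⟩
        have := hbit _ (List.mem_cons_of_mem _ hi')
        rw [h, testBit_add_pow _ _ this] at hi
        exact absurd hi (by simp)
    · rcases eq_or_ne p (i + 2 ^ j) with rfl | hpi2
      · rw [runF_untouched]
        · have h1 : i + 2 ^ j ≠ i := by omega
          simp only [cexF, if_neg h1, if_pos rfl]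
          have hn1 : (i + 2 ^ j) ∉ (i :: is) := by
            simp only [List.mem_cons]; push_neg; exact ⟨h1, hinotmem⟩
          have hcond : i + 2 ^ j - 2 ^ j ∈ i :: is ∧ 2 ^ j ≤ i + 2 ^ j := by
            rw [Nat.add_sub_cancel]; exact ⟨List.mem_cons_self .., by omega⟩
          rw [if_neg hn1, if_pos hcond, Nat.add_sub_cancel]
          simp
        · intro op hop
          simp only [List.mem_map] at hop
          obtain ⟨i', hi', rfl⟩ := hop
          dsimp only
          constructor
          · intro h
            have := hbit _ (List.mem_cons_of_mem _ hi')
            rw [← h, hibit] at this; exact absurd this (by simp)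
          · intro h
            have : i = i' := by omega
            exact hineq (this ▸ hi')
      · have hv' : ∀ q, q = p ∨ (q = p + 2 ^ j ∧ p ∈ is) ∨ (q = p - 2 ^ j ∧ 2 ^ j ≤ p ∧ p - 2 ^ j ∈ is) →
            cexF v (i, i + 2 ^ j, d i) q = v q := by
          rintro q (rfl | ⟨rfl, hmem⟩ | ⟨rfl, hle, hmem⟩)
          · simp only [cexF]; rw [if_neg hpi, if_neg hpi2]
          · simp only [cexF]
            have hb := hbit _ (List.mem_cons_of_mem _ hmem)
            have h1 : p + 2 ^ j ≠ i := fun h => by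
              rw [← h, testBit_add_pow _ _ hb] at hi; exact absurd hi (by simp)
            have h2 : p + 2 ^ j ≠ i + 2 ^ j := fun h => hpi (by omega)
            rw [if_neg h1, if_neg h2]
          · simp only [cexF]
            have h1 : p - 2 ^ j ≠ i := fun h => hpi2 (by omega)
            have h2 : p - 2 ^ j ≠ i + 2 ^ j := fun h => by
              have hb := hbit _ (List.mem_cons_of_mem _ hmem)
              rw [h, hibit] at hb; exact absurd hb (by simp)
            rw [if_neg h1, if_neg h2]
        rw [ih _ hnd' (fun i' h => hbit _ (List.mem_cons_of_mem _ h))]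
        by_cases hp1 : p ∈ is
        · rw [if_pos hp1, if_pos (List.mem_cons_of_mem _ hp1),
            hv' p (Or.inl rfl), hv' (p + 2 ^ j) (Or.inr (Or.inl ⟨rfl, hp1⟩))]
        · rw [if_neg hp1, if_neg (show p ∉ i :: is by simp [List.mem_cons, hpi, hp1])]
          by_cases hp2 : p - 2 ^ j ∈ is ∧ 2 ^ j ≤ p
          · have hc : p - 2 ^ j ∈ i :: is ∧ 2 ^ j ≤ p := ⟨List.mem_cons_of_mem _ hp2.1, hp2.2⟩
            rw [if_pos hp2, if_pos hc,
              hv' p (Or.inl rfl), hv' (p - 2 ^ j) (Or.inr (Or.inr ⟨rfl, hp2.2, hp2.1⟩))]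
          · rw [if_neg hp2, if_neg (show ¬(p - 2 ^ j ∈ i :: is ∧ 2 ^ j ≤ p) from ?_),
              hv' p (Or.inl rfl)]
            rintro ⟨hm, hle⟩
            rcases List.mem_cons.mp hm with h | h
            · exact hpi2 (by omega)
            · exact hp2 ⟨h, hle⟩


def arcFun (n a b r : ℕ) : Bool := decide ((r + (n - a)) % n < b)

lemma decide_and' (p q : Prop) [Decidable p] [Decidable q] :
    (decide p && decide q) = decide (p ∧ q) := by by_cases p <;> by_cases q <;> simp [*]
lemma decide_or' (p q : Prop) [Decidable p] [Decidable q] :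
    (decide p || decide q) = decide (p ∨ q) := by by_cases p <;> by_cases q <;> simp [*]

lemma bool_min_eq (p q : Bool) : min p q = (p && q) := by revert p q; decide
lemma bool_max_eq (p q : Bool) : max p q = (p || q) := by revert p q; decide

lemma halfclean (n a b r : ℕ) (hn : 0 < n) (ha : a < 2 * n) (hb : b ≤ 2 * n) (hr : r < n) :
    min (arcFun (2 * n) a b r) (arcFun (2 * n) a b (r + n)) = arcFun n (a % n) (b - n) r ∧
    max (arcFun (2 * n) a b r) (arcFun (2 * n) a b (r + n)) = arcFun n (a % n) (min b n) r := by
  set x := (r + (2 * n - a)) % (2 * n) with hxdef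
  have hx2 : x < 2 * n := Nat.mod_lt _ (by omega)
  have e0 : arcFun (2 * n) a b r = decide (x < b) := rfl
  -- the value at the partner position
  have e1 : arcFun (2 * n) a b (r + n) = decide ((x + n) % (2 * n) < b) := by
    have h1 : r + n + (2 * n - a) = (r + (2 * n - a)) + n := by omega
    have h2 : ((r + (2 * n - a)) + n) % (2 * n) = (x + n) % (2 * n) := by
      rw [hxdef, Nat.mod_add_mod]
    simp only [arcFun, h1, h2]
  -- the reduced position mod n
  have f1 : (r + (n - a % n)) % n = x % n := by
    have hxn : x % n = (r + (2 * n - a)) % n := by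
      rw [hxdef, Nat.mod_mod_of_dvd _ ⟨2, by ring⟩]
    rw [hxn]
    rcases lt_or_ge a n with h | h
    · rw [Nat.mod_eq_of_lt h, show r + (2 * n - a) = (r + (n - a)) + n by omega,
        Nat.add_mod_right]
    · have e : a % n = a - n := by
        rw [Nat.mod_eq_sub_mod h, Nat.mod_eq_of_lt (by omega)]
      rw [e, show r + (2 * n - a) = r + (n - (a - n)) by omega]
  have earc : ∀ c, arcFun n (a % n) c r = decide (x % n < c) := by
    intro c; simp only [arcFun, f1]
  rcases lt_or_ge x n with h | h
  · have hxn : x % n = x := Nat.mod_eq_of_lt h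
    have hpart : (x + n) % (2 * n) = x + n := Nat.mod_eq_of_lt (by omega)
    rw [e0, e1, earc, earc, hxn, hpart, bool_min_eq, bool_max_eq, decide_and', decide_or']
    constructor
    · exact decide_eq_decide.mpr (by omega)
    · exact decide_eq_decide.mpr (by omega)
  · have hxn : x % n = x - n := by
      rw [Nat.mod_eq_sub_mod h, Nat.mod_eq_of_lt (by omega)]
    have hpart : (x + n) % (2 * n) = x - n := by
      rw [show x + n = (x - n) + 2 * n by omega, Nat.add_mod_right,
        Nat.mod_eq_of_lt (by omega)]
    rw [e0, e1, earc, earc, hxn, hpart, bool_min_eq, bool_max_eq, decide_and', decide_or']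
    constructor
    · exact decide_eq_decide.mpr (by omega)
    · exact decide_eq_decide.mpr (by omega)

def cnt (v : ℕ → Bool) (base n : ℕ) : ℕ := ∑ r ∈ Finset.range n, (v (base + r)).toNat


/-- adding `2^j` to a number with bit `j` clear stays in the same `2^t`-block. -/
lemma block_partner {i j t : ℕ} (hj : j < t) (hbit : i.testBit j = false) :
    (i + 2 ^ j) / 2 ^ t = i / 2 ^ t ∧ (i + 2 ^ j) % 2 ^ t = i % 2 ^ t + 2 ^ j := by
  rw [testBit_false_iff_mod] at hbit
  have hdvd : (2 : ℕ) ^ (j + 1) ∣ 2 ^ t := pow_dvd_pow 2 (by omega)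
  set P := (2 : ℕ) ^ (j + 1) with hP
  set T := (2 : ℕ) ^ t with hT
  have hPpos : 0 < P := Nat.pow_pos (by norm_num)
  have hTpos : 0 < T := Nat.pow_pos (by norm_num)
  have hP2 : P = 2 ^ j + 2 ^ j := by rw [hP]; ring
  set w := i % T with hw
  have hwP : w % P = i % P := Nat.mod_mod_of_dvd _ hdvd
  have hwlt : w < T := Nat.mod_lt _ hTpos
  -- w + 2^j < T
  have hq : w / P < T / P := Nat.div_lt_div_of_lt_of_dvd hdvd hwlt
  have hqq : P * (T / P) = T := Nat.mul_div_cancel' hdvd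
  have hqe : P * (w / P) + w % P = w := Nat.div_add_mod ..
  have hb2 : w % P < 2 ^ j := by rw [hwP]; exact hbit
  have hkey : w + 2 ^ j < T := by
    have h1 : P * (w / P + 1) ≤ P * (T / P) := Nat.mul_le_mul_left _ (by omega)
    have h2 : P * (w / P + 1) = P * (w / P) + P := by ring
    omega
  have hi : T * (i / T) + w = i := Nat.div_add_mod ..
  have e1 : i + 2 ^ j = (w + 2 ^ j) + T * (i / T) := by omega
  constructor
  · rw [e1, Nat.add_mul_div_left _ _ hTpos, Nat.div_eq_of_lt hkey, Nat.zero_add]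
  · rw [e1, Nat.add_mul_mod_self_left, Nat.mod_eq_of_lt hkey]

lemma partner_lt {i j m : ℕ} (hj : j < m) (hbit : i.testBit j = false) (hi : i < 2 ^ m) :
    i + 2 ^ j < 2 ^ m := by
  have h := (block_partner hj hbit).1
  rw [Nat.div_eq_of_lt hi] at h
  have hpos : 0 < (2:ℕ) ^ m := Nat.pow_pos (by norm_num)
  exact ((Nat.div_eq_zero_iff).mp h).resolve_left (by omega)

lemma halfBlockBound {m t B : ℕ} (ht : t < m) (h : (B + 1) * 2 ^ t ≤ 2 ^ m) :
    (B / 2 + 1) * 2 ^ (t + 1) ≤ 2 ^ m := by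
  have e : (2 : ℕ) ^ m = 2 ^ (t + 1) * 2 ^ (m - (t + 1)) := by
    rw [← pow_add]; congr 1; omega
  set X := (2 : ℕ) ^ (m - (t + 1)) with hX
  have hXpos : 0 < X := Nat.pow_pos (by norm_num)
  have htp : (2 : ℕ) ^ (t + 1) = 2 ^ t * 2 := by ring
  have htpos : 0 < (2 : ℕ) ^ t := Nat.pow_pos (by norm_num)
  have h1 : (B + 1) * 2 ^ t ≤ (2 * X) * 2 ^ t := by
    rw [e, htp] at h; calc (B+1) * 2^t ≤ 2^t * 2 * X := h
    _ = (2 * X) * 2 ^ t := by ring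
  have h2 : B + 1 ≤ 2 * X := Nat.le_of_mul_le_mul_right h1 htpos
  have h3 : B / 2 + 1 ≤ X := by omega
  calc (B / 2 + 1) * 2 ^ (t + 1) ≤ X * 2 ^ (t + 1) := Nat.mul_le_mul_right _ h3
  _ = 2 ^ m := by rw [e]; ring

lemma blk_div (C u r : ℕ) (hr : r < 2 ^ u) : (C * 2 ^ u + r) / 2 ^ u = C := by
  rw [show C * 2 ^ u + r = r + 2 ^ u * C by ring,
    Nat.add_mul_div_left _ _ (Nat.pow_pos (by norm_num)),
    Nat.div_eq_of_lt hr, Nat.zero_add]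

lemma blk_mod (C u r : ℕ) (hr : r < 2 ^ u) : (C * 2 ^ u + r) % 2 ^ u = r := by
  rw [show C * 2 ^ u + r = r + C * 2 ^ u by ring, Nat.add_mul_mod_self_right,
    Nat.mod_eq_of_lt hr]

/-- the `k`-th bit is constant on `2^u`-aligned blocks for `u ≤ k`. -/
lemma testBit_const_block {u k : ℕ} (hu : u ≤ k) (C r : ℕ) (hr : r < 2 ^ u) :
    (C * 2 ^ u + r).testBit k = (C * 2 ^ u).testBit k := by
  have e : (2 : ℕ) ^ k = 2 ^ u * 2 ^ (k - u) := by rw [← pow_add]; congr 1; omega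
  rw [Nat.testBit_eq_decide_div_mod_eq, Nat.testBit_eq_decide_div_mod_eq]
  congr 2
  rw [e, ← Nat.div_div_eq_div_mul, ← Nat.div_div_eq_div_mul, blk_div C u r hr,
    Nat.mul_div_cancel _ (Nat.pow_pos (by norm_num))]


lemma cnt_le (v : ℕ → Bool) (base n : ℕ) : cnt v base n ≤ n := by
  calc cnt v base n ≤ ∑ _r ∈ Finset.range n, 1 :=
        Finset.sum_le_sum (fun r _ => Bool.toNat_le _)
  _ = n := by simp

lemma cnt_eq_zero_iff (v : ℕ → Bool) (base n : ℕ) :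
    cnt v base n = 0 ↔ ∀ r < n, v (base + r) = false := by
  rw [cnt, Finset.sum_eq_zero_iff]
  constructor
  · intro h r hr
    have := h r (Finset.mem_range.mpr hr)
    cases hv : v (base + r) <;> simp [hv] at this ⊢
  · intro h r hr
    rw [h r (Finset.mem_range.mp hr)]; rfl

lemma cnt_eq_full_iff (v : ℕ → Bool) (base n : ℕ) :
    cnt v base n = n ↔ ∀ r < n, v (base + r) = true := by
  constructor
  · intro h r hr
    by_contra hc
    have hfalse : (v (base + r)).toNat = 0 := by
      cases hv : v (base + r); · rfl
      · exact absurd hv hc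
    have hmem : r ∈ Finset.range n := Finset.mem_range.mpr hr
    have key := Finset.add_sum_erase (Finset.range n) (fun x => (v (base + x)).toNat) hmem
    have hrest : ∑ x ∈ (Finset.range n).erase r, (v (base + x)).toNat ≤ n - 1 := by
      calc _ ≤ ∑ _x ∈ (Finset.range n).erase r, 1 :=
            Finset.sum_le_sum (fun x _ => Bool.toNat_le _)
      _ = n - 1 := by simp [Finset.card_erase_of_mem hmem]
    rw [cnt] at h; omega
  · intro h
    rw [cnt]
    calc ∑ r ∈ Finset.range n, (v (base + r)).toNat
        = ∑ r ∈ Finset.range n, 1 :=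
          Finset.sum_congr rfl (fun r hr => by rw [h r (Finset.mem_range.mp hr)]; rfl)
    _ = n := by simp

lemma cnt_split (v : ℕ → Bool) (base n1 n2 : ℕ) :
    cnt v base (n1 + n2) = cnt v base n1 + cnt v (base + n1) n2 := by
  induction n2 with
  | zero => simp [cnt]
  | succ n ih =>
      have e1 : cnt v base (n1 + (n + 1)) = cnt v base (n1 + n) + (v (base + (n1 + n))).toNat := by
        rw [show n1 + (n + 1) = (n1 + n) + 1 by omega]; simp [cnt, Finset.sum_range_succ]
      have e2 : cnt v (base + n1) (n + 1) = cnt v (base + n1) n + (v (base + n1 + n)).toNat := by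
        simp [cnt, Finset.sum_range_succ]
      rw [e1, ih, e2, show base + (n1 + n) = base + n1 + n by omega]
      omega

lemma cnt_congr {v w : ℕ → Bool} (base n : ℕ) (h : ∀ r < n, v (base + r) = w (base + r)) :
    cnt v base n = cnt w base n :=
  Finset.sum_congr rfl (fun r hr => by rw [h r (Finset.mem_range.mp hr)])

lemma cexF_pair_sum (v : ℕ → Bool) (op : ℕ × ℕ × Bool) (hne : op.1 ≠ op.2.1) :
    (cexF v op op.1).toNat + (cexF v op op.2.1).toNat = (v op.1).toNat + (v op.2.1).toNat := by
  obtain ⟨p, q, d⟩ := op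
  simp only at hne
  simp only [cexF, if_pos rfl, if_neg (Ne.symm hne)]
  generalize v p = a
  generalize v q = b
  cases d <;> cases a <;> cases b <;> simp

lemma cnt_cexF (v : ℕ → Bool) (op : ℕ × ℕ × Bool) (base n : ℕ) (hne : op.1 ≠ op.2.1)
    (h : (∃ r1 < n, op.1 = base + r1) ∧ (∃ r2 < n, op.2.1 = base + r2) ∨
      (∀ r < n, base + r ≠ op.1 ∧ base + r ≠ op.2.1)) :
    cnt (cexF v op) base n = cnt v base n := by
  rcases h with ⟨⟨r1, hr1, he1⟩, ⟨r2, hr2, he2⟩⟩ | h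
  · have hr12 : r1 ≠ r2 := fun h => hne (by rw [he1, he2, h])
    have hm1 : r1 ∈ Finset.range n := Finset.mem_range.mpr hr1
    have hm2 : r2 ∈ (Finset.range n).erase r1 :=
      Finset.mem_erase.mpr ⟨Ne.symm hr12, Finset.mem_range.mpr hr2⟩
    have key : ∀ f : ℕ → Bool, cnt f base n =
        (f (base + r1)).toNat + ((f (base + r2)).toNat +
          ∑ x ∈ ((Finset.range n).erase r1).erase r2, (f (base + x)).toNat) := by
      intro f
      rw [cnt, ← Finset.add_sum_erase _ _ hm1, ← Finset.add_sum_erase _ _ hm2]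
    rw [key, key v]
    have hrest : ∀ x ∈ ((Finset.range n).erase r1).erase r2,
        (cexF v op (base + x)).toNat = (v (base + x)).toNat := by
      intro x hx
      have hx2 := Finset.mem_erase.mp hx
      have hx1 := Finset.mem_erase.mp hx2.2
      refine congrArg Bool.toNat
        (cexF_of_ne v op (fun h => hx1.1 ?_) (fun h => hx2.1 ?_))
      · rw [he1] at h; omega
      · rw [he2] at h; omega
    rw [Finset.sum_congr rfl hrest, ← he1, ← he2]
    have := cexF_pair_sum v op hne
    omega
  · refine cnt_congr base n (fun r hr => cexF_of_ne v op (h r hr).1 (h r hr).2)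

lemma cnt_runF (ops : List (ℕ × ℕ × Bool)) (v : ℕ → Bool) (base n : ℕ)
    (hne : ∀ op ∈ ops, op.1 ≠ op.2.1)
    (h : ∀ op ∈ ops, (∃ r1 < n, op.1 = base + r1) ∧ (∃ r2 < n, op.2.1 = base + r2) ∨
      (∀ r < n, base + r ≠ op.1 ∧ base + r ≠ op.2.1)) :
    cnt (runF v ops) base n = cnt v base n := by
  induction ops generalizing v with
  | nil => rfl
  | cons op ops ih =>
      rw [runF_cons, ih _ (fun o ho => hne o (List.mem_cons_of_mem _ ho))
        (fun o ho => h o (List.mem_cons_of_mem _ ho)),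
        cnt_cexF v op base n (hne op (List.mem_cons_self ..)) (h op (List.mem_cons_self ..))]

def rowOps (m j k : ℕ) : List (ℕ × ℕ × Bool) :=
  ((List.range (2 ^ m)).filter fun i => !i.testBit j).map fun i => (i, i + 2 ^ j, !i.testBit k)

def mergeOps (m k t : ℕ) : List (ℕ × ℕ × Bool) :=
  ((List.range t).reverse).flatMap fun j => rowOps m j k

def IsArcOn (v : ℕ → Bool) (base n : ℕ) : Prop :=
  ∃ a b, a < n ∧ b ≤ n ∧ ∀ r < n, v (base + r) = arcFun n a b r

def MonoOn (v : ℕ → Bool) (base n : ℕ) (dir : Bool) : Prop :=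
  ∀ r s, r ≤ s → s < n →
    (if dir then v (base + r) ≤ v (base + s) else v (base + s) ≤ v (base + r))






lemma mergeOps_zero (m k : ℕ) : mergeOps m k 0 = [] := rfl

lemma mergeOps_succ (m k t : ℕ) :
    mergeOps m k (t + 1) = rowOps m t k ++ mergeOps m k t := by
  unfold mergeOps
  rw [List.range_succ, List.reverse_append]
  rfl



lemma arcFun_zero (n a r : ℕ) : arcFun n a 0 r = false := by simp [arcFun]

lemma arcFun_full (n a r : ℕ) (hn : 0 < n) : arcFun n a n r = true := by
  simp only [arcFun, decide_eq_true_iff]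
  exact Nat.mod_lt _ hn


/-- membership in the index list of a row -/
lemma row_is_mem (m j q : ℕ) :
    q ∈ (List.range (2 ^ m)).filter (fun i => !i.testBit j) ↔
      q < 2 ^ m ∧ q.testBit j = false := by
  rw [List.mem_filter, List.mem_range]
  simp

lemma row_mem {m j k : ℕ} {op : ℕ × ℕ × Bool} (h : op ∈ rowOps m j k) :
    ∃ i, i < 2 ^ m ∧ i.testBit j = false ∧ op = (i, i + 2 ^ j, !i.testBit k) := by
  rw [rowOps, List.mem_map] at h
  obtain ⟨i, hi, rfl⟩ := h
  exact ⟨i, ((row_is_mem m j i).mp hi).1, ((row_is_mem m j i).mp hi).2, rfl⟩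

/-- pointwise values after one row, at a position with bit `j` clear -/
lemma row_val (m j k p : ℕ) (hj : j < m) (v : ℕ → Bool) (hp : p < 2 ^ m)
    (hbit : p.testBit j = false) :
    runF v (rowOps m j k) p =
      (if !p.testBit k then min (v p) (v (p + 2 ^ j)) else max (v p) (v (p + 2 ^ j))) ∧
    runF v (rowOps m j k) (p + 2 ^ j) =
      (if !p.testBit k then max (v p) (v (p + 2 ^ j)) else min (v p) (v (p + 2 ^ j))) := by
  have hnd : ((List.range (2 ^ m)).filter (fun i => !i.testBit j)).Nodup :=
    List.nodup_range.filter _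
  have hbit' : ∀ i ∈ (List.range (2 ^ m)).filter (fun i => !i.testBit j),
      i.testBit j = false := fun i hi => ((row_is_mem m j i).mp hi).2
  have h1 := rowRun j (fun i => !i.testBit k) v _ hnd hbit' p
  have h2 := rowRun j (fun i => !i.testBit k) v _ hnd hbit' (p + 2 ^ j)
  have hmem : p ∈ (List.range (2 ^ m)).filter (fun i => !i.testBit j) :=
    (row_is_mem m j p).mpr ⟨hp, hbit⟩
  rw [show rowOps m j k = ((List.range (2 ^ m)).filter (fun i => !i.testBit j)).map
      (fun i => (i, i + 2 ^ j, !i.testBit k)) from rfl]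
  constructor
  · rw [h1, if_pos hmem]
  · have hnot : p + 2 ^ j ∉ (List.range (2 ^ m)).filter (fun i => !i.testBit j) := by
      intro hmem2
      have := ((row_is_mem m j _).mp hmem2).2
      rw [testBit_add_pow p j hbit] at this
      exact absurd this (by simp)
    have hc : (p + 2 ^ j - 2 ^ j ∈ (List.range (2 ^ m)).filter (fun i => !i.testBit j)
        ∧ 2 ^ j ≤ p + 2 ^ j) := by
      rw [Nat.add_sub_cancel]; exact ⟨hmem, by omega⟩
    rw [h2, if_neg hnot, if_pos hc, Nat.add_sub_cancel]

lemma bool_le_iff (x y : Bool) : x ≤ y ↔ x = false ∨ y = true := by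
  revert x y; decide

theorem mergeDown (m k : ℕ) (hk : k ≤ m) :
    ∀ t, t ≤ k → ∀ v : ℕ → Bool,
      (∀ B, (B + 1) * 2 ^ t ≤ 2 ^ m → IsArcOn v (B * 2 ^ t) (2 ^ t)) →
      (∀ B, (B + 1) * 2 ^ t ≤ 2 ^ m →
          MonoOn (runF v (mergeOps m k t)) (B * 2 ^ t) (2 ^ t) (!(B * 2 ^ t).testBit k)) ∧
      (∀ B, (B + 1) * 2 ^ t ≤ 2 ^ m →
          cnt (runF v (mergeOps m k t)) (B * 2 ^ t) (2 ^ t) = cnt v (B * 2 ^ t) (2 ^ t)) := by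
  intro t
  induction t with
  | zero =>
    intro _ v _
    rw [mergeOps_zero]
    constructor
    · intro B _ r s hrs hs
      have hr0 : r = 0 := by omega
      have hs0 : s = 0 := by omega
      subst hr0; subst hs0
      split <;> exact le_refl _
    · intro B _; rfl
  | succ t ih =>
    intro ht v harc
    have htk : t < k := ht
    have htm : t < m := lt_of_lt_of_le htk hk
    have hnpos : 0 < (2 : ℕ) ^ t := Nat.pow_pos (by norm_num)
    set n := (2 : ℕ) ^ t with hn
    have e2 : (2 : ℕ) ^ (t + 1) = 2 * n := by rw [hn]; ring
    set v' := runF v (rowOps m t k) with hv'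
    have hw : runF v (mergeOps m k (t + 1)) = runF v' (mergeOps m k t) := by
      rw [mergeOps_succ, runF_append]
    -- Step A: per-(t+1)-block structure of v'
    have blockArc : ∀ B', (B' + 1) * 2 ^ (t + 1) ≤ 2 ^ m →
        (IsArcOn v' ((2 * B') * n) n ∧ IsArcOn v' ((2 * B' + 1) * n) n) ∧
        (if !(B' * 2 ^ (t + 1)).testBit k
          then (cnt v' ((2 * B') * n) n = 0 ∨ cnt v' ((2 * B' + 1) * n) n = n)
          else (cnt v' ((2 * B' + 1) * n) n = 0 ∨ cnt v' ((2 * B') * n) n = n)) := by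
      intro B' hB'
      obtain ⟨a, b, ha, hb, hab⟩ := harc B' hB'
      have hbase : B' * 2 ^ (t + 1) = 2 * B' * n := by rw [e2]; ring
      have hbasen : B' * 2 ^ (t + 1) + n = (2 * B' + 1) * n := by rw [e2]; ring
      set base := B' * 2 ^ (t + 1) with hbasedef
      rw [e2] at ha hb
      simp only [e2] at hab
      have hval : ∀ r < n,
          v' (base + r) = (if !base.testBit k then arcFun n (a % n) (b - n) r
            else arcFun n (a % n) (min b n) r) ∧
          v' (base + n + r) = (if !base.testBit k then arcFun n (a % n) (min b n) r
            else arcFun n (a % n) (b - n) r) := by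
        intro r hr
        have hp : base + r < 2 ^ m := by
          have h0 : (B' + 1) * 2 ^ (t + 1) = base + 2 * n := by rw [hbasedef, e2]; ring
          omega
        have hpbit : (base + r).testBit t = false := by
          rw [testBit_false_iff_mod]
          have := blk_mod B' (t + 1) r (by omega)
          rw [← hbasedef] at this
          rw [← hn]
          omega
        have hpk : (base + r).testBit k = base.testBit k := by
          have h1 := testBit_const_block (u := t + 1) (k := k) ht B' r (by omega)
          rw [← hbasedef] at h1
          exact h1
        have hrv := row_val m t k (base + r) htm v hp hpbit
        rw [← hv', ← hn] at hrv
        have hvlow : v (base + r) = arcFun (2 * n) a b r := hab r (by omega)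
        have hvhigh : v (base + r + n) = arcFun (2 * n) a b (r + n) := by
          rw [show base + r + n = base + (r + n) by omega]
          exact hab (r + n) (by omega)
        have hhc := halfclean n a b r hnpos (by omega) (by omega) hr
        constructor
        · rw [hrv.1, hpk, hvlow, hvhigh]
          split
          · exact hhc.1
          · exact hhc.2
        · rw [show base + n + r = base + r + n by omega, hrv.2, hpk, hvlow, hvhigh]
          split
          · exact hhc.2
          · exact hhc.1
      have hlo : ∀ r < n, v' (2 * B' * n + r) =
          (if !base.testBit k then arcFun n (a % n) (b - n) r
            else arcFun n (a % n) (min b n) r) := by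
        intro r hr; rw [← hbase]; exact (hval r hr).1
      have hhi : ∀ r < n, v' ((2 * B' + 1) * n + r) =
          (if !base.testBit k then arcFun n (a % n) (min b n) r
            else arcFun n (a % n) (b - n) r) := by
        intro r hr
        rw [show (2 * B' + 1) * n + r = base + n + r by omega]
        exact (hval r hr).2
      have hamod : a % n < n := Nat.mod_lt _ hnpos
      refine ⟨⟨?_, ?_⟩, ?_⟩
      · refine ⟨a % n, if !base.testBit k then b - n else min b n, hamod, ?_, ?_⟩
        · split <;> omega
        · intro r hr; rw [hlo r hr]; split <;> simp
      · refine ⟨a % n, if !base.testBit k then min b n else b - n, hamod, ?_, ?_⟩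
        · split <;> omega
        · intro r hr; rw [hhi r hr]; split <;> simp
      · rcases le_or_gt b n with hbn | hbn
        · have hz : b - n = 0 := by omega
          split
          · left
            rw [cnt_eq_zero_iff]
            intro r hr; rw [hlo r hr, if_pos ‹_›, hz, arcFun_zero]
          · left
            rw [cnt_eq_zero_iff]
            intro r hr; rw [hhi r hr, if_neg ‹_›, hz, arcFun_zero]
        · have hf : min b n = n := by omega
          split
          · right
            rw [cnt_eq_full_iff]
            intro r hr; rw [hhi r hr, if_pos ‹_›, hf, arcFun_full _ _ _ hnpos]
          · right
            rw [cnt_eq_full_iff]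
            intro r hr; rw [hlo r hr, if_neg ‹_›, hf, arcFun_full _ _ _ hnpos]
    -- Step B: arcs at level t for v'
    have harc' : ∀ B, (B + 1) * n ≤ 2 ^ m → IsArcOn v' (B * n) n := by
      intro B hB
      have hB2 := halfBlockBound htm (hn ▸ hB)
      obtain ⟨⟨hloarc, hhiarc⟩, _⟩ := blockArc (B / 2) hB2
      have hcase : B = 2 * (B / 2) ∨ B = 2 * (B / 2) + 1 := by omega
      rcases hcase with hc | hc
      · rw [hc]; exact hloarc
      · rw [hc]; exact hhiarc
    obtain ⟨ihMono, ihCnt⟩ := ih (le_of_lt htk) v' harc'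
    have hdirlow : ∀ B' : ℕ, (2 * B' * n).testBit k = (B' * 2 ^ (t + 1)).testBit k := by
      intro B'
      rw [show 2 * B' * n = B' * 2 ^ (t + 1) by rw [e2]; ring]
    have hdirhigh : ∀ B' : ℕ, ((2 * B' + 1) * n).testBit k = (B' * 2 ^ (t + 1)).testBit k := by
      intro B'
      rw [show (2 * B' + 1) * n = B' * 2 ^ (t + 1) + n by rw [e2]; ring]
      exact testBit_const_block (u := t + 1) (k := k) ht B' n (by omega)
    constructor
    · -- MonoOn at level t+1
      intro B' hB'
      rw [hw]
      set w := runF v' (mergeOps m k t) with hwdef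
      intro r s hrs hs
      have hlowB : (2 * B' + 1) * n ≤ 2 ^ m := by
        have h1 : (B' + 1) * 2 ^ (t + 1) = (2 * B' + 2) * n := by rw [e2]; ring
        have h2 : (2 * B' + 1) * n + n = (2 * B' + 2) * n := by ring
        omega
      have hhighB : (2 * B' + 1 + 1) * n ≤ 2 ^ m := by
        have h1 : (B' + 1) * 2 ^ (t + 1) = (2 * B' + 1 + 1) * n := by rw [e2]; ring
        omega
      have eqlow : ∀ x : ℕ, 2 * B' * n + x = B' * 2 ^ (t + 1) + x := by
        intro x; rw [show 2 * B' * n = B' * 2 ^ (t + 1) by rw [e2]; ring]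
      have eqhigh : ∀ x : ℕ, (2 * B' + 1) * n + x = B' * 2 ^ (t + 1) + (n + x) := by
        intro x
        rw [show (2 * B' + 1) * n = B' * 2 ^ (t + 1) + n by rw [e2]; ring]
        omega
      rcases lt_or_ge s n with hsn | hsn
      · have hm := ihMono (2 * B') hlowB r s hrs hsn
        rw [eqlow r, eqlow s, hdirlow B'] at hm
        exact hm
      · rcases le_or_gt n r with hrn | hrn
        · have hm := ihMono (2 * B' + 1) hhighB (r - n) (s - n)
            (by omega) (by omega)
          rw [eqhigh (r - n), eqhigh (s - n), hdirhigh B'] at hm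
          rw [show n + (r - n) = r by omega, show n + (s - n) = s by omega] at hm
          exact hm
        · obtain ⟨_, hcross⟩ := blockArc B' hB'
          have hcntlow := ihCnt (2 * B') hlowB
          have hcnthigh := ihCnt (2 * B' + 1) hhighB
          split at hcross <;> rename_i hdir
          · rw [if_pos hdir, bool_le_iff]
            rcases hcross with hc | hc
            · left
              have hz : cnt w (2 * B' * n) n = 0 := by rw [hcntlow, hc]
              have := (cnt_eq_zero_iff w (2 * B' * n) n).mp hz r hrn
              rw [eqlow r] at this
              exact this
            · right
              have hf : cnt w ((2 * B' + 1) * n) n = n := by rw [hcnthigh, hc]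
              have := (cnt_eq_full_iff w ((2 * B' + 1) * n) n).mp hf (s - n) (by omega)
              rw [eqhigh (s - n), show n + (s - n) = s by omega] at this
              exact this
          · rw [if_neg hdir, bool_le_iff]
            rcases hcross with hc | hc
            · left
              have hz : cnt w ((2 * B' + 1) * n) n = 0 := by rw [hcnthigh, hc]
              have := (cnt_eq_zero_iff w ((2 * B' + 1) * n) n).mp hz (s - n) (by omega)
              rw [eqhigh (s - n), show n + (s - n) = s by omega] at this
              exact this
            · right
              have hf : cnt w (2 * B' * n) n = n := by rw [hcntlow, hc]
              have := (cnt_eq_full_iff w (2 * B' * n) n).mp hf r hrn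
              rw [eqlow r] at this
              exact this
    · -- cnt preservation at level t+1
      intro B' hB'
      rw [hw]
      have hsplit : ∀ u : ℕ → Bool, cnt u (B' * 2 ^ (t + 1)) (2 ^ (t + 1)) =
          cnt u (2 * B' * n) n + cnt u ((2 * B' + 1) * n) n := by
        intro u
        rw [show B' * 2 ^ (t + 1) = 2 * B' * n by rw [e2]; ring,
          show (2 : ℕ) ^ (t + 1) = n + n by rw [e2]; ring, cnt_split,
          show 2 * B' * n + n = (2 * B' + 1) * n by ring]
      rw [hsplit, hsplit]
      have hlowB : (2 * B' + 1) * n ≤ 2 ^ m := by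
        have h1 : (B' + 1) * 2 ^ (t + 1) = (2 * B' + 2) * n := by rw [e2]; ring
        have h2 : (2 * B' + 1) * n + n = (2 * B' + 2) * n := by ring
        omega
      have hhighB : (2 * B' + 1 + 1) * n ≤ 2 ^ m := by
        have h1 : (B' + 1) * 2 ^ (t + 1) = (2 * B' + 1 + 1) * n := by rw [e2]; ring
        omega
      rw [ihCnt (2 * B') hlowB, ihCnt (2 * B' + 1) hhighB]
      rw [← hsplit v', ← hsplit v]
      -- row at offset 2^t preserves counts on (t+1)-blocks
      rw [hv']
      refine cnt_runF (rowOps m t k) v (B' * 2 ^ (t + 1)) (2 ^ (t + 1)) ?_ ?_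
      · intro op hop
        obtain ⟨i, hi, hbit, rfl⟩ := row_mem hop
        simp only [ne_eq]
        omega
      · intro op hop
        obtain ⟨i, hi, hbit, rfl⟩ := row_mem hop
        have hsame := block_partner (show t < t + 1 by omega) hbit
        have hppos : 0 < (2 : ℕ) ^ (t + 1) := Nat.pow_pos (by norm_num)
        have hmodlt : i % 2 ^ (t + 1) < 2 ^ t := (testBit_false_iff_mod i t).mp hbit
        have hdm1 : 2 ^ (t + 1) * (i / 2 ^ (t + 1)) + i % 2 ^ (t + 1) = i :=
          Nat.div_add_mod ..
        have hdm2 : 2 ^ (t + 1) * ((i + 2 ^ t) / 2 ^ (t + 1)) + (i + 2 ^ t) % 2 ^ (t + 1)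
            = i + 2 ^ t := Nat.div_add_mod ..
        have hcomm : 2 ^ (t + 1) * B' = B' * 2 ^ (t + 1) := Nat.mul_comm ..
        rcases eq_or_ne (i / 2 ^ (t + 1)) B' with hD | hD
        · left
          rw [hD] at hdm1
          have hD2 : (i + 2 ^ t) / 2 ^ (t + 1) = B' := by rw [hsame.1, hD]
          rw [hD2] at hdm2
          constructor
          · refine ⟨i % 2 ^ (t + 1), Nat.mod_lt _ hppos, ?_⟩
            simp only
            omega
          · refine ⟨(i + 2 ^ t) % 2 ^ (t + 1), Nat.mod_lt _ hppos, ?_⟩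
            simp only
            omega
        · right
          intro r hr
          constructor
          · intro hcontra
            simp only at hcontra
            have : i / 2 ^ (t + 1) = B' := by
              rw [← hcontra] at hD ⊢
              exact blk_div B' (t + 1) r hr
            exact hD this
          · intro hcontra
            simp only at hcontra
            have h1 : (i + 2 ^ t) / 2 ^ (t + 1) = B' := by
              rw [← hcontra]
              exact blk_div B' (t + 1) r hr
            rw [hsame.1] at h1
            exact hD h1


lemma monoOn_true {v : ℕ → Bool} {base n : ℕ} (h : MonoOn v base n true) :
    ∀ r s, r ≤ s → s < n → v (base + r) ≤ v (base + s) := by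
  intro r s h1 h2; have := h r s h1 h2; simpa using this

lemma monoOn_false {v : ℕ → Bool} {base n : ℕ} (h : MonoOn v base n false) :
    ∀ r s, r ≤ s → s < n → v (base + s) ≤ v (base + r) := by
  intro r s h1 h2; have := h r s h1 h2; simpa using this

lemma le_false_eq {x : Bool} (h : x ≤ false) : x = false := by
  rcases (bool_le_iff x false).mp h with h | h
  · exact h
  · exact absurd h (by simp)

lemma true_le_eq {x : Bool} (h : true ≤ x) : x = true := by
  rcases (bool_le_iff true x).mp h with h | h
  · exact absurd h (by simp)
  · exact h

lemma arcFun_spec (n a b r : ℕ) (ha : a < n) (hr : r < n) :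
    arcFun n a b r = decide ((if a ≤ r then r - a else r + (n - a)) < b) := by
  rcases le_or_gt a r with h | h
  · rw [arcFun, if_pos h, show r + (n - a) = (r - a) + n by omega, Nat.add_mod_right,
      Nat.mod_eq_of_lt (by omega)]
  · rw [arcFun, if_neg (by omega), Nat.mod_eq_of_lt (by omega)]

lemma mono_val_asc (v : ℕ → Bool) (base n : ℕ) (h : MonoOn v base n true)
    (r : ℕ) (hr : r < n) : v (base + r) = decide (n - cnt v base n ≤ r) := by
  have hc := cnt_le v base n
  rcases hv : v (base + r) with _ | _
  · have hpre : ∀ s < r + 1, v (base + s) = false := by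
      intro s hs
      have h1 := monoOn_true h s r (by omega) hr
      rw [hv] at h1
      exact le_false_eq h1
    have hz : cnt v base (r + 1) = 0 := (cnt_eq_zero_iff v base (r + 1)).mpr hpre
    have hsplit := cnt_split v base (r + 1) (n - r - 1)
    rw [show r + 1 + (n - r - 1) = n by omega] at hsplit
    have hle := cnt_le v (base + (r + 1)) (n - r - 1)
    have hnle : ¬(n - cnt v base n ≤ r) := by omega
    simp [hnle]
  · have hsuf : ∀ s < n - r, v (base + r + s) = true := by
      intro s hs
      have h1 := monoOn_true h r (r + s) (by omega) (by omega)
      rw [hv, show base + (r + s) = base + r + s by omega] at h1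
      exact true_le_eq h1
    have hf : cnt v (base + r) (n - r) = n - r :=
      (cnt_eq_full_iff v (base + r) (n - r)).mpr hsuf
    have hsplit := cnt_split v base r (n - r)
    rw [show r + (n - r) = n by omega] at hsplit
    have hle := cnt_le v base r
    have : n - cnt v base n ≤ r := by omega
    simp [this]

lemma mono_val_desc (v : ℕ → Bool) (base n : ℕ) (h : MonoOn v base n false)
    (r : ℕ) (hr : r < n) : v (base + r) = decide (r < cnt v base n) := by
  have hc := cnt_le v base n
  rcases hv : v (base + r) with _ | _
  · have hsuf : ∀ s < n - r, v (base + r + s) = false := by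
      intro s hs
      have h1 := monoOn_false h r (r + s) (by omega) (by omega)
      rw [hv, show base + (r + s) = base + r + s by omega] at h1
      exact le_false_eq h1
    have hz : cnt v (base + r) (n - r) = 0 :=
      (cnt_eq_zero_iff v (base + r) (n - r)).mpr hsuf
    have hsplit := cnt_split v base r (n - r)
    rw [show r + (n - r) = n by omega] at hsplit
    have hle := cnt_le v base r
    have : ¬(r < cnt v base n) := by omega
    simp [this]
  · have hpre : ∀ s < r + 1, v (base + s) = true := by
      intro s hs
      have h1 := monoOn_false h s r (by omega) hr
      rw [hv] at h1
      exact true_le_eq h1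
    have hf : cnt v base (r + 1) = r + 1 := (cnt_eq_full_iff v base (r + 1)).mpr hpre
    have hsplit := cnt_split v base (r + 1) (n - r - 1)
    rw [show r + 1 + (n - r - 1) = n by omega] at hsplit
    have : r < cnt v base n := by omega
    simp [this]

lemma sorted_pair_arc (v : ℕ → Bool) (base n : ℕ) (hn : 0 < n)
    (h1 : MonoOn v base n true) (h2 : MonoOn v (base + n) n false) :
    IsArcOn v base (2 * n) := by
  have hc1 := cnt_le v base n
  have hc2 := cnt_le v (base + n) n
  refine ⟨n - cnt v base n, cnt v base n + cnt v (base + n) n, by omega, by omega, ?_⟩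
  intro r hr
  rw [arcFun_spec (2 * n) _ _ r (by omega) hr]
  rcases lt_or_ge r n with h | h
  · rw [mono_val_asc v base n h1 r h]
    split <;> exact decide_eq_decide.mpr (by omega)
  · rw [show base + r = (base + n) + (r - n) by omega,
      mono_val_desc v (base + n) n h2 (r - n) (by omega), if_pos (by omega)]
    exact decide_eq_decide.mpr (by omega)

def netUpTo (m K : ℕ) : List (ℕ × ℕ × Bool) :=
  (List.range K).flatMap fun k' => mergeOps m (k' + 1) (k' + 1)

lemma netUpTo_succ (m K : ℕ) :
    netUpTo m (K + 1) = netUpTo m K ++ mergeOps m (K + 1) (K + 1) := by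
  unfold netUpTo
  rw [List.range_succ]
  simp

theorem netSorted (m : ℕ) (v : ℕ → Bool) : ∀ r s, r ≤ s → s < 2 ^ m →
    runF v (netUpTo m m) r ≤ runF v (netUpTo m m) s := by
  suffices h : ∀ K, K ≤ m → ∀ B, (B + 1) * 2 ^ K ≤ 2 ^ m →
      MonoOn (runF v (netUpTo m K)) (B * 2 ^ K) (2 ^ K) (decide (B % 2 = 0)) by
    intro r s hrs hs
    have h0 : (0 + 1) * 2 ^ m ≤ 2 ^ m := by simp
    have hm := h m le_rfl 0 h0
    have := monoOn_true (by simpa using hm) r s hrs hs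
    simpa using this
  intro K
  induction K with
  | zero =>
    intro _ B _ r s hrs hsn
    have hr0 : r = 0 := by omega
    have hs0 : s = 0 := by omega
    subst hr0; subst hs0
    split <;> exact le_refl _
  | succ K ih =>
    intro hK B hB
    have hKm : K < m := hK
    rw [netUpTo_succ, runF_append]
    set vK := runF v (netUpTo m K) with hvK
    have harc : ∀ C, (C + 1) * 2 ^ (K + 1) ≤ 2 ^ m → IsArcOn vK (C * 2 ^ (K + 1)) (2 ^ (K + 1)) := by
      intro C hC
      have hb1 : (2 * C + 1) * 2 ^ K ≤ 2 ^ m :=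
        calc (2 * C + 1) * 2 ^ K ≤ (2 * C + 2) * 2 ^ K := Nat.mul_le_mul_right _ (by omega)
        _ = (C + 1) * 2 ^ (K + 1) := by ring
        _ ≤ 2 ^ m := hC
      have hb2 : (2 * C + 1 + 1) * 2 ^ K ≤ 2 ^ m :=
        calc (2 * C + 1 + 1) * 2 ^ K = (C + 1) * 2 ^ (K + 1) := by ring
        _ ≤ 2 ^ m := hC
      have hlow := ih (le_of_lt hKm) (2 * C) hb1
      have hhigh := ih (le_of_lt hKm) (2 * C + 1) hb2
      have hd1 : (decide ((2 * C) % 2 = 0)) = true := by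
        simp [Nat.mul_mod_right]
      have hd2 : (decide ((2 * C + 1) % 2 = 0)) = true ↔ False := by
        constructor
        · intro hcon
          rw [decide_eq_true_iff] at hcon
          omega
        · exact False.elim
      have hd2' : (decide ((2 * C + 1) % 2 = 0)) = false := by
        rcases hrr : decide ((2 * C + 1) % 2 = 0) with _ | _
        · rfl
        · exact absurd (hd2.mp hrr) id
      rw [hd1] at hlow
      rw [hd2'] at hhigh
      have e3 : 2 * C * 2 ^ K = C * 2 ^ (K + 1) := by ring
      have e4 : (2 * C + 1) * 2 ^ K = C * 2 ^ (K + 1) + 2 ^ K := by ring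
      rw [e3] at hlow
      rw [e4] at hhigh
      have := sorted_pair_arc vK (C * 2 ^ (K + 1)) (2 ^ K)
        (Nat.pow_pos (by norm_num)) hlow hhigh
      rw [show 2 * 2 ^ K = 2 ^ (K + 1) by ring] at this
      exact this
    have hMono := (mergeDown m (K + 1) hK (K + 1) le_rfl vK harc).1 B hB
    have hdir : (B * 2 ^ (K + 1)).testBit (K + 1) = decide (B % 2 = 1) := by
      rw [Nat.testBit_eq_decide_div_mod_eq,
        Nat.mul_div_cancel _ (Nat.pow_pos (by norm_num))]
    have hdir2 : (!(B * 2 ^ (K + 1)).testBit (K + 1)) = decide (B % 2 = 0) := by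
      rw [hdir]
      have h01 : B % 2 = 0 ∨ B % 2 = 1 := by omega
      rcases h01 with h | h <;> simp [h]
    rw [hdir2] at hMono
    exact hMono


lemma set_of_getElem? {α : Type*} (l : List α) (n : ℕ) (a : α) (h : l[n]? = some a) :
    l.set n a = l := by
  apply List.ext_getElem?
  intro i
  rw [List.getElem?_set]
  split
  · rename_i heq
    subst heq
    split
    · exact h.symm
    · rename_i hlen
      rw [List.getElem?_eq_none (by omega)] at h
      exact absurd h (by simp)
  · rfl

lemma cons_set_perm {α : Type*} :
    ∀ (l : List α) (q : ℕ) (c d : α), l[q]? = some c → (c :: l.set q d).Perm (d :: l) := by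
  intro l
  induction l with
  | nil => intro q c d h; simp at h
  | cons x t ih =>
    intro q c d h
    cases q with
    | zero =>
      simp at h
      subst h
      exact List.Perm.swap _ _ _
    | succ q =>
      simp only [List.getElem?_cons_succ] at h
      rw [List.set_cons_succ]
      exact (List.Perm.swap x c (t.set q d)).trans (((ih q c d h).cons x).trans
        (List.Perm.swap d x t))

lemma set_set_perm {α : Type*} :
    ∀ (l : List α) (p q : ℕ) (a b : α), p ≠ q → l[p]? = some a → l[q]? = some b →
      ((l.set p b).set q a).Perm l := by
  intro l
  induction l with
  | nil => intro p q a b _ h1 _; simp at h1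
  | cons x t ih =>
    intro p q a b hpq h1 h2
    cases p with
    | zero =>
      cases q with
      | zero => exact absurd rfl hpq
      | succ q =>
        have hxa : x = a := by simpa using h1
        subst hxa
        simp only [List.getElem?_cons_succ] at h2
        rw [List.set_cons_zero, List.set_cons_succ]
        exact cons_set_perm t q b x h2
    | succ p =>
      cases q with
      | zero =>
        have hxb : x = b := by simpa using h2
        subst hxb
        simp only [List.getElem?_cons_succ] at h1
        rw [List.set_cons_succ, List.set_cons_zero]
        exact cons_set_perm t p a x h1
      | succ q =>
        simp only [List.getElem?_cons_succ] at h1 h2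
        rw [List.set_cons_succ, List.set_cons_succ]
        exact List.Perm.cons _ (ih p q a b (by omega) h1 h2)

variable {α : Type*} [LinearOrder α]

lemma cexList_perm (l : List α) (op : ℕ × ℕ × Bool) (hne : op.1 ≠ op.2.1) :
    (cexList l op).Perm l := by
  unfold cexList
  rcases h1 : l[op.1]? with _ | a
  · exact List.Perm.refl l
  · rcases h2 : l[op.2.1]? with _ | b
    · exact List.Perm.refl l
    · show (if (if op.2.2 then decide (a ≤ b) else decide (b ≤ a)) = true then l
          else (l.set op.1 b).set op.2.1 a).Perm l
      split <;> split <;>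
        first
          | exact List.Perm.refl l
          | exact set_set_perm l op.1 op.2.1 a b hne h1 h2

lemma cexList_length (l : List α) (op : ℕ × ℕ × Bool) :
    (cexList l op).length = l.length := by
  unfold cexList
  rcases h1 : l[op.1]? with _ | a
  · rfl
  · rcases h2 : l[op.2.1]? with _ | b
    · rfl
    · show (if (if op.2.2 then decide (a ≤ b) else decide (b ≤ a)) = true then l
          else (l.set op.1 b).set op.2.1 a).length = l.length
      split <;> split <;> first | rfl | simp [List.length_set]

lemma foldl_perm (ops : List (ℕ × ℕ × Bool)) (h : ∀ op ∈ ops, op.1 ≠ op.2.1) :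
    ∀ l : List α, (List.foldl cexList l ops).Perm l := by
  induction ops with
  | nil => intro l; exact List.Perm.refl l
  | cons op ops ih =>
    intro l
    rw [List.foldl_cons]
    exact (ih (fun o ho => h o (List.mem_cons_of_mem _ ho)) (cexList l op)).trans
      (cexList_perm l op (h op (List.mem_cons_self ..)))

lemma foldl_length (ops : List (ℕ × ℕ × Bool)) :
    ∀ l : List α, (List.foldl cexList l ops).length = l.length := by
  induction ops with
  | nil => intro l; rfl
  | cons op ops ih =>
    intro l
    rw [List.foldl_cons, ih, cexList_length]

lemma cexList_map {β : Type*} [LinearOrder β] (f : α → β) (hf : Monotone f)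
    (l : List α) (op : ℕ × ℕ × Bool) :
    cexList (l.map f) op = (cexList l op).map f := by
  unfold cexList
  rcases h1 : l[op.1]? with _ | a <;> rcases h2 : l[op.2.1]? with _ | b <;>
    simp only [List.getElem?_map, h1, h2, Option.map_some, Option.map_none]
  all_goals try rfl
  case _ =>
    show (if (if op.2.2 then decide (f a ≤ f b) else decide (f b ≤ f a)) = true then l.map f
        else ((l.map f).set op.1 (f b)).set op.2.1 (f a)) =
      (if (if op.2.2 then decide (a ≤ b) else decide (b ≤ a)) = true then l
        else (l.set op.1 b).set op.2.1 a).map f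
    have e1 : (l.map f)[op.1]? = some (f a) := by rw [List.getElem?_map, h1]; rfl
    have e2 : (l.map f)[op.2.1]? = some (f b) := by rw [List.getElem?_map, h2]; rfl
    rcases hd : op.2.2 with _ | _
    · show (if decide (f b ≤ f a) = true then l.map f
          else ((l.map f).set op.1 (f b)).set op.2.1 (f a)) =
        (if decide (b ≤ a) = true then l else (l.set op.1 b).set op.2.1 a).map f
      by_cases hba : b ≤ a
      · rw [if_pos (show decide (f b ≤ f a) = true by simpa using hf hba),
          if_pos (show decide (b ≤ a) = true by simpa using hba)]
      · have hab : a ≤ b := le_of_not_ge hba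
        rw [if_neg (show ¬decide (b ≤ a) = true by simpa using hba),
          List.map_set, List.map_set]
        by_cases hfba : f b ≤ f a
        · have hfeq : f a = f b := le_antisymm (hf hab) hfba
          rw [if_pos (show decide (f b ≤ f a) = true by simpa using hfba),
            show f b = f a from hfeq.symm, set_of_getElem? _ _ _ e1, hfeq,
            set_of_getElem? _ _ _ e2]
        · rw [if_neg (show ¬decide (f b ≤ f a) = true by simpa using hfba)]
    · show (if decide (f a ≤ f b) = true then l.map f
          else ((l.map f).set op.1 (f b)).set op.2.1 (f a)) =
        (if decide (a ≤ b) = true then l else (l.set op.1 b).set op.2.1 a).map f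
      by_cases hab : a ≤ b
      · rw [if_pos (show decide (f a ≤ f b) = true by simpa using hf hab),
          if_pos (show decide (a ≤ b) = true by simpa using hab)]
      · have hba : b ≤ a := le_of_not_ge hab
        rw [if_neg (show ¬decide (a ≤ b) = true by simpa using hab),
          List.map_set, List.map_set]
        by_cases hfab : f a ≤ f b
        · have hfeq : f a = f b := le_antisymm hfab (hf hba)
          rw [if_pos (show decide (f a ≤ f b) = true by simpa using hfab),
            show f b = f a from hfeq.symm, set_of_getElem? _ _ _ e1, hfeq,
            set_of_getElem? _ _ _ e2]
        · rw [if_neg (show ¬decide (f a ≤ f b) = true by simpa using hfab)]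

lemma foldl_map {β : Type*} [LinearOrder β] (f : α → β) (hf : Monotone f)
    (ops : List (ℕ × ℕ × Bool)) : ∀ l : List α,
    List.foldl cexList (l.map f) ops = (List.foldl cexList l ops).map f := by
  induction ops with
  | nil => intro l; rfl
  | cons op ops ih =>
    intro l
    rw [List.foldl_cons, List.foldl_cons, cexList_map f hf, ih]

def vOf (l : List Bool) : ℕ → Bool := fun i => l.getD i false

lemma getD_set (L : List Bool) (i v x : ℕ → ℕ → ℕ → Bool) : True := trivial

lemma getD_set' (L : List Bool) (i : ℕ) (v : Bool) (x : ℕ) (hi : i < L.length) :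
    (L.set i v).getD x false = if x = i then v else L.getD x false := by
  rw [List.getD_eq_getElem?_getD, List.getD_eq_getElem?_getD, List.getElem?_set]
  rcases eq_or_ne x i with rfl | hne
  · rw [if_pos rfl, if_pos rfl, if_pos hi]
    rfl
  · rw [if_neg (Ne.symm hne), if_neg hne]

lemma cex_transfer (l : List Bool) (op : ℕ × ℕ × Bool) (h1 : op.1 < l.length)
    (h2 : op.2.1 < l.length) (hne : op.1 ≠ op.2.1) :
    vOf (cexList l op) = cexF (vOf l) op := by
  have e1 : l[op.1]? = some l[op.1] := List.getElem?_eq_getElem h1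
  have e2 : l[op.2.1]? = some l[op.2.1] := List.getElem?_eq_getElem h2
  have g1 : vOf l op.1 = l[op.1] := List.getD_eq_getElem l false h1
  have g2 : vOf l op.2.1 = l[op.2.1] := List.getD_eq_getElem l false h2
  funext x
  rw [cexF]
  conv_lhs => rw [cexList]
  rw [e1, e2]
  show (if (if op.2.2 then decide (l[op.1] ≤ l[op.2.1]) else decide (l[op.2.1] ≤ l[op.1])) = true
      then l else (l.set op.1 l[op.2.1]).set op.2.1 l[op.1]).getD x false = _
  rcases hd : op.2.2 with _ | _ <;>
    simp only [Bool.false_eq_true, if_false, if_true]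
  · -- descending
    by_cases hba : l[op.2.1] ≤ l[op.1]
    · rw [if_pos (by simpa using hba)]
      rcases eq_or_ne x op.1 with rfl | hx1
      · rw [if_pos rfl, g1, g2, max_eq_left hba]
        all_goals first | rfl | exact List.getD_eq_getElem l false h1 | exact List.getD_eq_getElem l false h2
      · rw [if_neg hx1]
        rcases eq_or_ne x op.2.1 with rfl | hx2
        · rw [if_pos rfl, g1, g2, min_eq_right hba]
          all_goals first | rfl | exact List.getD_eq_getElem l false h1 | exact List.getD_eq_getElem l false h2
        · rw [if_neg hx2]
          all_goals first | rfl | exact List.getD_eq_getElem l false h1 | exact List.getD_eq_getElem l false h2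
    · have hab : l[op.1] ≤ l[op.2.1] := le_of_not_ge hba
      rw [if_neg (by simpa using hba)]
      rw [getD_set' _ _ _ _ (by rw [List.length_set]; exact h2),
        getD_set' _ _ _ _ h1]
      rcases eq_or_ne x op.2.1 with rfl | hx2
      · rw [if_pos rfl, if_neg (Ne.symm hne), if_pos rfl, g1, g2, min_eq_left hab]
        all_goals first | rfl | exact List.getD_eq_getElem l false h1 | exact List.getD_eq_getElem l false h2
      · rw [if_neg hx2]
        rcases eq_or_ne x op.1 with rfl | hx1
        · rw [if_pos rfl, if_pos rfl, g1, g2, max_eq_right hab]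
          all_goals first | rfl | exact List.getD_eq_getElem l false h1 | exact List.getD_eq_getElem l false h2
        · rw [if_neg hx1, if_neg hx1, if_neg hx2]
          all_goals first | rfl | exact List.getD_eq_getElem l false h1 | exact List.getD_eq_getElem l false h2
  · -- ascending
    by_cases hab : l[op.1] ≤ l[op.2.1]
    · rw [if_pos (by simpa using hab)]
      rcases eq_or_ne x op.1 with rfl | hx1
      · rw [if_pos rfl, g1, g2, min_eq_left hab]
        all_goals first | rfl | exact List.getD_eq_getElem l false h1 | exact List.getD_eq_getElem l false h2
      · rw [if_neg hx1]
        rcases eq_or_ne x op.2.1 with rfl | hx2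
        · rw [if_pos rfl, g1, g2, max_eq_right hab]
          all_goals first | rfl | exact List.getD_eq_getElem l false h1 | exact List.getD_eq_getElem l false h2
        · rw [if_neg hx2]
          all_goals first | rfl | exact List.getD_eq_getElem l false h1 | exact List.getD_eq_getElem l false h2
    · have hba : l[op.2.1] ≤ l[op.1] := le_of_not_ge hab
      rw [if_neg (by simpa using hab)]
      rw [getD_set' _ _ _ _ (by rw [List.length_set]; exact h2),
        getD_set' _ _ _ _ h1]
      rcases eq_or_ne x op.2.1 with rfl | hx2
      · rw [if_pos rfl, if_neg (Ne.symm hne), if_pos rfl, g1, g2, max_eq_left hba]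
        all_goals first | rfl | exact List.getD_eq_getElem l false h1 | exact List.getD_eq_getElem l false h2
      · rw [if_neg hx2]
        rcases eq_or_ne x op.1 with rfl | hx1
        · rw [if_pos rfl, if_pos rfl, g1, g2, min_eq_right hba]
          all_goals first | rfl | exact List.getD_eq_getElem l false h1 | exact List.getD_eq_getElem l false h2
        · rw [if_neg hx1, if_neg hx1, if_neg hx2]
          all_goals first | rfl | exact List.getD_eq_getElem l false h1 | exact List.getD_eq_getElem l false h2

lemma run_transfer : ∀ (ops : List (ℕ × ℕ × Bool)) (l : List Bool),
    (∀ op ∈ ops, op.1 < l.length ∧ op.2.1 < l.length ∧ op.1 ≠ op.2.1) →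
    vOf (List.foldl cexList l ops) = runF (vOf l) ops := by
  intro ops
  induction ops with
  | nil => intro l _; rfl
  | cons op ops ih =>
    intro l h
    rw [List.foldl_cons]
    show vOf (List.foldl cexList (cexList l op) ops) = runF (cexF (vOf l) op) ops
    have hop := h op (List.mem_cons_self ..)
    rw [ih (cexList l op) (fun o ho => by
        rw [cexList_length]; exact h o (List.mem_cons_of_mem _ ho)),
      cex_transfer l op hop.1 hop.2.1 hop.2.2]


lemma bitonic_eq_net (m : ℕ) : bitonicPairs m = netUpTo m m := rfl

lemma bitonic_mem {m : ℕ} {op : ℕ × ℕ × Bool} (h : op ∈ bitonicPairs m) :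
    op.1 < 2 ^ m ∧ op.2.1 < 2 ^ m ∧ op.1 ≠ op.2.1 := by
  rw [bitonic_eq_net, netUpTo, List.mem_flatMap] at h
  obtain ⟨k', hk', hop⟩ := h
  rw [mergeOps, List.mem_flatMap] at hop
  obtain ⟨j, hj, hop⟩ := hop
  rw [List.mem_reverse, List.mem_range] at hj
  rw [List.mem_range] at hk'
  obtain ⟨i, hi, hbit, rfl⟩ := row_mem hop
  have hjm : j < m := by omega
  have hlt := partner_lt hjm hbit hi
  have hpos : 0 < (2 : ℕ) ^ j := Nat.pow_pos (by norm_num)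
  exact ⟨hi, hlt, by dsimp only; omega⟩

lemma runNetwork_foldl {α : Type*} [LinearOrder α] :
    ∀ (ops : List (ℕ × ℕ × Bool)) (l : List α) (acc : List (ℕ × ℕ)),
      List.foldl (fun s op => (cexList s.1 op, s.2 ++ [(op.1, op.2.1)])) (l, acc) ops =
        (List.foldl cexList l ops, acc ++ ops.map fun op => (op.1, op.2.1)) := by
  intro ops
  induction ops with
  | nil => intro l acc; simp
  | cons op ops ih =>
    intro l acc
    rw [List.foldl_cons, List.foldl_cons, ih]
    simp

lemma runNetwork_eq {α : Type*} [LinearOrder α] (m : ℕ) (l : List α) :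
    runNetwork m l = (List.foldl cexList l (bitonicPairs m),
      (bitonicPairs m).map fun op => (op.1, op.2.1)) := by
  rw [runNetwork, runNetwork_foldl]
  simp

lemma bool_sorted (m : ℕ) (lb : List Bool) (hlb : lb.length = 2 ^ m) :
    (List.foldl cexList lb (bitonicPairs m)).Pairwise (· ≤ ·) := by
  have hcond : ∀ op ∈ bitonicPairs m,
      op.1 < lb.length ∧ op.2.1 < lb.length ∧ op.1 ≠ op.2.1 := by
    intro op hop
    have := bitonic_mem hop
    rw [hlb]
    exact ⟨this.1, this.2.1, this.2.2⟩
  have htr := run_transfer (bitonicPairs m) lb hcond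
  have hlen : (List.foldl cexList lb (bitonicPairs m)).length = 2 ^ m := by
    rw [foldl_length, hlb]
  rw [List.pairwise_iff_getElem]
  intro i j hi hj hij
  have hs : runF (vOf lb) (netUpTo m m) i ≤ runF (vOf lb) (netUpTo m m) j :=
    netSorted m (vOf lb) i j (le_of_lt hij) (by omega)
  have hs2 : vOf (List.foldl cexList lb (bitonicPairs m)) i ≤
      vOf (List.foldl cexList lb (bitonicPairs m)) j := by
    rw [htr]
    exact hs
  have e1 : vOf (List.foldl cexList lb (bitonicPairs m)) i =
      (List.foldl cexList lb (bitonicPairs m))[i] :=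
    List.getD_eq_getElem _ false (by omega)
  have e2 : vOf (List.foldl cexList lb (bitonicPairs m)) j =
      (List.foldl cexList lb (bitonicPairs m))[j] :=
    List.getD_eq_getElem _ false (by omega)
  rw [e1, e2] at hs2
  exact hs2

end Bitonic

/-- Batcher's bitonic sorting network on `2^m` positions sorts: applied to any
list of length `2^m` over a linearly ordered type, it yields a permutation of
the list sorted in non-decreasing order; moreover, the sequence of position
pairs at which compare-exchanges are performed depends only on `m` and not on
the contents of the list. -/
theorem bitonic_network_sorts {α : Type*} [LinearOrder α] (m : ℕ)
    (l : List α) (hl : l.length = 2 ^ m) :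
    ((runNetwork m l).1).Perm l ∧
      ((runNetwork m l).1).Pairwise (· ≤ ·) ∧
      ∀ l' : List α, l'.length = 2 ^ m →
        (runNetwork m l).2 = (runNetwork m l').2 := by
  refine ⟨?_, ?_, ?_⟩
  · rw [Bitonic.runNetwork_eq]
    exact Bitonic.foldl_perm (bitonicPairs m) (fun op h => (Bitonic.bitonic_mem h).2.2) l
  · rw [Bitonic.runNetwork_eq]
    show (List.foldl cexList l (bitonicPairs m)).Pairwise (· ≤ ·)
    set r := List.foldl cexList l (bitonicPairs m) with hr
    rw [List.pairwise_iff_getElem]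
    intro i j hi hj hij
    by_contra hc
    have hji : r[j] < r[i] := not_le.mp hc
    set f : α → Bool := fun x => decide (r[i] ≤ x) with hf
    have hmono : Monotone f := by
      intro x y hxy
      by_cases hx : r[i] ≤ x
      · have hy : r[i] ≤ y := le_trans hx hxy
        simp [hf, hx, hy]
      · simp [hf, hx]
    have hmap := Bitonic.foldl_map f hmono (bitonicPairs m) l
    have hsor := Bitonic.bool_sorted m (l.map f) (by rw [List.length_map, hl])
    rw [hmap, ← hr] at hsor
    rw [List.pairwise_iff_getElem] at hsor
    have hle := hsor i j (by simpa using hi) (by simpa using hj) hij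
    rw [List.getElem_map, List.getElem_map] at hle
    have h1 : f r[i] = true := by simp [hf]
    have h2 : f r[j] = false := by
      simp only [hf]
      exact decide_eq_false (not_le.mpr hji)
    rw [h1, h2] at hle
    exact absurd hle (by decide)
  · intro l' _
    rw [Bitonic.runNetwork_eq, Bitonic.runNetwork_eq]
end
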